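/- Let λ, μ, ν ∈ ℕⁿ be weakly decreasing with |ν| = |λ| + |μ|, let f ∈ B(λ,μ,ν), let p be a complete turnpath in R_f, and let L be an f-flatspace. Then: (1) p can enter L only by crossing entrance edges of sides of L, and p can leave L only by crossing exit edges of sides of L; (2) inside L, p uses only turnvertices lying in border triangles of L, and p traverses the border of L in counterclockwise direction. -/

import Mathlib

/-!
Framework for hive flows on the honeycomb graph, following
Bürgisser–Ikenmeyer, "A max-flow algorithm for positivity of
Littlewood-Richardson coefficients".

Vertices of the triangular graph `Δ` with parameter `n` are the points
`x(m,i)` with `0 ≤ i ≤ m ≤ n` (`m` = row counted from the top, `i` =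
position in the row counted from the left).
-/

namespace LRFlows

/-- Edges of the triangular graph `Δ`:
* `dl m i` is the down-left slanted edge from `x(m,i)` to `x(m+1,i)`,
* `dr m i` is the down-right slanted edge from `x(m,i)` to `x(m+1,i+1)`,
* `hz m i` is the horizontal edge from `x(m,i)` to `x(m,i+1)`. -/
inductive EdgeK : Type
  | dl (m i : ℕ)
  | dr (m i : ℕ)
  | hz (m i : ℕ)
  deriving DecidableEq

namespace EdgeK

def valid (n : ℕ) : EdgeK → Prop
  | dl m i => i ≤ m ∧ m + 1 ≤ n
  | dr m i => i ≤ m ∧ m + 1 ≤ n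
  | hz m i => i + 1 ≤ m ∧ m ≤ n

end EdgeK

/-- Hive triangles: `up m i` is the upright triangle with vertices
`x(m,i), x(m+1,i), x(m+1,i+1)`; `down m i` is the downright triangle with
vertices `x(m,i), x(m,i+1), x(m+1,i+1)`. -/
inductive Tri : Type
  | up (m i : ℕ)
  | down (m i : ℕ)
  deriving DecidableEq

namespace Tri

def valid (n : ℕ) : Tri → Prop
  | up m i => i ≤ m ∧ m + 1 ≤ n
  | down m i => i + 1 ≤ m ∧ m + 1 ≤ n

/-- The three sides of a hive triangle, listed in clockwise order. -/
def sides : Tri → List EdgeK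
  | up m i => [.dr m i, .hz (m+1) i, .dl m i]
  | down m i => [.hz m i, .dl m (i+1), .dr m i]

end Tri

/-- `e` is a side of the hive triangle `T`. -/
def sideOf (e : EdgeK) (T : Tri) : Prop := e ∈ T.sides

/-- The side following a given side of a hive triangle in clockwise order
around the triangle. -/
def cwNext : Tri → EdgeK → EdgeK
  | .up m i, e =>
      if e = .dr m i then .hz (m+1) i else if e = .hz (m+1) i then .dl m i else .dr m i
  | .down m i, e =>
      if e = .hz m i then .dl m (i+1) else if e = .dl m (i+1) then .dr m i else .hz m i

/-- The edges on the right border of `Δ`. -/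
def onRight (n : ℕ) (e : EdgeK) : Prop := ∃ m, m + 1 ≤ n ∧ e = .dr m m
/-- The edges on the bottom border of `Δ`. -/
def onBottom (n : ℕ) (e : EdgeK) : Prop := ∃ i, i + 1 ≤ n ∧ e = .hz n i
/-- The edges on the left border of `Δ`. -/
def onLeft (n : ℕ) (e : EdgeK) : Prop := ∃ m, m + 1 ≤ n ∧ e = .dl m 0

/-- The unique upright hive triangle having `e` as a side. -/
def upOf : EdgeK → Tri
  | .dl m i => .up m i
  | .dr m i => .up m i
  | .hz m i => .up (m - 1) i

/-- The downright hive triangle having `e` as a side, if any. -/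
def dnOf? : EdgeK → Option Tri
  | .dl m i => if i = 0 then none else some (.down m (i - 1))
  | .dr m i => some (.down m i)
  | .hz m i => some (.down m i)

/-- A flow class on the honeycomb graph `G`, recorded by its throughput
function `E(Δ) → ℝ`:  `thru k` is the net flow through the white vertex on
the edge `k` into the adjacent upright hive triangle. -/
structure Flow : Type where
  dl : ℕ → ℕ → ℝ
  dr : ℕ → ℕ → ℝ
  hz : ℕ → ℕ → ℝ

namespace Flow

def thru (f : Flow) : EdgeK → ℝ
  | .dl m i => f.dl m i
  | .dr m i => f.dr m i
  | .hz m i => f.hz m i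

end Flow

noncomputable instance : Add Flow :=
  ⟨fun f g => ⟨fun m i => f.dl m i + g.dl m i, fun m i => f.dr m i + g.dr m i,
    fun m i => f.hz m i + g.hz m i⟩⟩

noncomputable instance : SMul ℝ Flow :=
  ⟨fun c f => ⟨fun m i => c * f.dl m i, fun m i => c * f.dr m i, fun m i => c * f.hz m i⟩⟩

/-- A flow class is recorded by its values on the (valid) edges of `Δ` only;
we normalize all other values to `0`, so that flow classes correspond
bijectively to normalized `Flow`s. -/
def Normalized (n : ℕ) (f : Flow) : Prop :=
  (∀ m i, ¬ (EdgeK.dl m i).valid n → f.dl m i = 0) ∧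
  (∀ m i, ¬ (EdgeK.dr m i).valid n → f.dr m i = 0) ∧
  (∀ m i, ¬ (EdgeK.hz m i).valid n → f.hz m i = 0)

/-- Kirchhoff's conservation laws, in throughput form: the throughputs of the
three sides of every hive triangle (measured into the respective upright
triangle) sum to zero. -/
def IsFlow (n : ℕ) (f : Flow) : Prop :=
  (∀ m i, i ≤ m → m + 1 ≤ n → f.dl m i + f.dr m i + f.hz (m + 1) i = 0) ∧
  (∀ m i, i + 1 ≤ m → m + 1 ≤ n → f.hz m i + f.dl m (i + 1) + f.dr m i = 0)

/-- An integral flow class. -/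
def IntegralFlow (f : Flow) : Prop :=
  ∀ m i, (∃ z : ℤ, f.dl m i = (z : ℝ)) ∧ (∃ z : ℤ, f.dr m i = (z : ℝ)) ∧
    (∃ z : ℤ, f.hz m i = (z : ℝ))

/-- A `2^ℓ`-integral flow class. -/
def PowIntegral (l : ℕ) (f : Flow) : Prop :=
  ∀ m i, (∃ z : ℤ, f.dl m i = (z : ℝ) * 2 ^ l) ∧ (∃ z : ℤ, f.dr m i = (z : ℝ) * 2 ^ l) ∧
    (∃ z : ℤ, f.hz m i = (z : ℝ) * 2 ^ l)

/-- Rhombi (unions of an upright and a downright hive triangle sharing a side),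
indexed by the direction of their diagonal:
* `hzD m i` has horizontal diagonal `hz (m+1) i`, triangles `up m i` and `down (m+1) i`;
* `dlD m i` has diagonal `dl m (i+1)`, triangles `up m (i+1)` and `down m i`;
* `drD m i` has diagonal `dr m i`, triangles `up m i` and `down m i`. -/
inductive Rhombus : Type
  | hzD (m i : ℕ)
  | dlD (m i : ℕ)
  | drD (m i : ℕ)
  deriving DecidableEq

namespace Rhombus

def valid (n : ℕ) : Rhombus → Prop
  | hzD m i => i ≤ m ∧ m + 2 ≤ n
  | dlD m i => i + 1 ≤ m ∧ m + 1 ≤ n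
  | drD m i => i + 1 ≤ m ∧ m + 1 ≤ n

/-- The diagonal of a rhombus (joining its two obtuse vertices). -/
def diag : Rhombus → EdgeK
  | hzD m i => .hz (m+1) i
  | dlD m i => .dl m (i+1)
  | drD m i => .dr m i

/-- The upright hive triangle of a rhombus. -/
def triU : Rhombus → Tri
  | hzD m i => .up m i
  | dlD m i => .up m (i+1)
  | drD m i => .up m i

/-- The downright hive triangle of a rhombus. -/
def triD : Rhombus → Tri
  | hzD m i => .down (m+1) i
  | dlD m i => .down m i
  | drD m i => .down m i

end Rhombus

/-- The slack `σ(ρ,f)` of a rhombus `ρ` with respect to a flow class `f`: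
the sum of the values of the corresponding hive function at the two obtuse
vertices minus the sum at the two acute vertices, expressed through the
throughputs of the two sides of `ρ` parallel to one fixed direction. -/
noncomputable def slack (f : Flow) : Rhombus → ℝ
  | .hzD m i => f.dl (m+1) (i+1) - f.dl m i
  | .dlD m i => f.hz (m+1) (i+1) - f.hz m i
  | .drD m i => f.hz m i - f.hz (m+1) i

/-- A hive flow: a flow class all of whose rhombus slacks are nonnegative. -/
def IsHive (n : ℕ) (f : Flow) : Prop :=
  IsFlow n f ∧ ∀ ρ : Rhombus, ρ.valid n → 0 ≤ slack f ρ

/-- `∑_{i<n} lam i`, i.e. `|λ|` for `λ ∈ ℕⁿ`. -/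
def psum (n : ℕ) (lam : ℕ → ℕ) : ℕ := ∑ i ∈ Finset.range n, lam i

/-- `λ, μ, ν ∈ ℕⁿ` are weakly decreasing with `|ν| = |λ| + |μ|`. -/
def PartitionData (n : ℕ) (lam mu nu : ℕ → ℕ) : Prop :=
  (∀ i j, i ≤ j → j + 1 ≤ n → lam j ≤ lam i) ∧
  (∀ i j, i ≤ j → j + 1 ≤ n → mu j ≤ mu i) ∧
  (∀ i j, i ≤ j → j + 1 ≤ n → nu j ≤ nu i) ∧
  psum n nu = psum n lam + psum n mu

/-- Membership in the polytope `B(λ,μ,ν)` of bounded hive flows.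
The `i`-th right border edge from the top is `dr (i-1) (i-1)` with capacity
`λ_i = lam (i-1)`; the `i`-th bottom border edge from the right is
`hz n (n-i)` with capacity `μ_i`; the `i`-th left border edge from the top is
`dl (i-1) 0` with capacity `ν_i`. -/
def MemB (n : ℕ) (lam mu nu : ℕ → ℕ) (f : Flow) : Prop :=
  Normalized n f ∧ IsHive n f ∧
  (∀ m, m + 1 ≤ n → 0 ≤ f.dr m m ∧ f.dr m m ≤ (lam m : ℝ)) ∧
  (∀ i, i + 1 ≤ n → 0 ≤ f.hz n i ∧ f.hz n i ≤ (mu (n - 1 - i) : ℝ)) ∧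
  (∀ m, m + 1 ≤ n → 0 ≤ -(f.dl m 0) ∧ -(f.dl m 0) ≤ (nu m : ℝ))

/-- Membership in the polytope `P(λ,μ,ν)` of capacity achieving hive flows. -/
def MemP (n : ℕ) (lam mu nu : ℕ → ℕ) (f : Flow) : Prop :=
  Normalized n f ∧ IsHive n f ∧
  (∀ m, m + 1 ≤ n → f.dr m m = (lam m : ℝ)) ∧
  (∀ i, i + 1 ≤ n → f.hz n i = (mu (n - 1 - i) : ℝ)) ∧
  (∀ m, m + 1 ≤ n → -(f.dl m 0) = (nu m : ℝ))

/-- `B(λ,μ,ν)_ℤ`. -/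
def MemBZ (n : ℕ) (lam mu nu : ℕ → ℕ) (f : Flow) : Prop :=
  MemB n lam mu nu f ∧ IntegralFlow f

/-- `P(λ,μ,ν)_ℤ`. -/
def MemPZ (n : ℕ) (lam mu nu : ℕ → ℕ) (f : Flow) : Prop :=
  MemP n lam mu nu f ∧ IntegralFlow f

/-- The overall throughput `δ(f)`: the total throughput through the right and
bottom borders of `Δ`. -/
noncomputable def thr (n : ℕ) (f : Flow) : ℝ :=
  ∑ m ∈ Finset.range n, f.dr m m + ∑ i ∈ Finset.range n, f.hz n i

/-! ### The honeycomb graph `G` -/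

/-- Vertices of the honeycomb graph `G`: white vertices on the edges of `Δ`,
black vertices in the hive triangles, a source and a target. -/
inductive GVertex : Type
  | white (e : EdgeK)
  | black (T : Tri)
  | src
  | tgt
  deriving DecidableEq

/-- The adjacency of the directed honeycomb graph `G` (each undirected edge
appears as two opposite directed edges). -/
def GAdj (n : ℕ) (u v : GVertex) : Prop :=
  match u, v with
  | .white e, .black T => e.valid n ∧ T.valid n ∧ sideOf e T
  | .black T, .white e => e.valid n ∧ T.valid n ∧ sideOf e T
  | .src, .white e => e.valid n ∧ (onRight n e ∨ onBottom n e)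
  | .white e, .src => e.valid n ∧ (onRight n e ∨ onBottom n e)
  | .tgt, .white e => e.valid n ∧ onLeft n e
  | .white e, .tgt => e.valid n ∧ onLeft n e
  | _, _ => False

/-- The (cyclically) consecutive pairs of a list. -/
def cyclePairs (l : List GVertex) : List (GVertex × GVertex) := l.zip (l.rotate 1)

/-- A (directed) cycle in `G`, recorded as the list of its pairwise distinct
vertices. -/
def IsGCycle (n : ℕ) (l : List GVertex) : Prop :=
  l ≠ [] ∧ l.Nodup ∧ ∀ p ∈ cyclePairs l, GAdj n p.1 p.2

/-- A proper cycle uses neither the source nor the target. -/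
def ProperCycle (l : List GVertex) : Prop :=
  GVertex.src ∉ l ∧ GVertex.tgt ∉ l

/-- The throughput function of the integral flow class defined by a cycle in `G`. -/
def cycleDelta (l : List GVertex) (e : EdgeK) : ℝ :=
  (if (GVertex.white e, GVertex.black (upOf e)) ∈ cyclePairs l then (1 : ℝ) else 0) -
  (if (GVertex.black (upOf e), GVertex.white e) ∈ cyclePairs l then (1 : ℝ) else 0)

/-- The flow class `f + c` for a cycle `c` in `G`. -/
noncomputable def addCycle (f : Flow) (l : List GVertex) : Flow :=
  ⟨fun m i => f.dl m i + cycleDelta l (.dl m i),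
   fun m i => f.dr m i + cycleDelta l (.dr m i),
   fun m i => f.hz m i + cycleDelta l (.hz m i)⟩

/-- `f` and `g` are neighbours: `g - f` is a proper cycle in `G`. -/
def NeighbourFlow (n : ℕ) (f g : Flow) : Prop :=
  ∃ l : List GVertex, IsGCycle n l ∧ ProperCycle l ∧
    ∀ e : EdgeK, g.thru e - f.thru e = cycleDelta l e

/-- The support of (the reduced representative of) a flow class `d`, as a
relation on directed edges of `G`. -/
def suppEdge (n : ℕ) (d : Flow) (u v : GVertex) : Prop :=
  match u, v with
  | .white e, .black T =>
      e.valid n ∧ T.valid n ∧ ((T = upOf e ∧ 0 < d.thru e) ∨ (dnOf? e = some T ∧ d.thru e < 0))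
  | .black T, .white e =>
      e.valid n ∧ T.valid n ∧ ((T = upOf e ∧ d.thru e < 0) ∨ (dnOf? e = some T ∧ 0 < d.thru e))
  | .src, .white e => e.valid n ∧ (onRight n e ∨ onBottom n e) ∧ 0 < d.thru e
  | .white e, .src => e.valid n ∧ (onRight n e ∨ onBottom n e) ∧ d.thru e < 0
  | .tgt, .white e => e.valid n ∧ onLeft n e ∧ 0 < d.thru e
  | .white e, .tgt => e.valid n ∧ onLeft n e ∧ d.thru e < 0
  | _, _ => False

/-! ### Turns and slack contributions -/

/-- A turn: a path of length 2 in `G` inside `Δ`, entering a hive triangle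
through the white vertex on side `inE` and leaving it through the white vertex
on side `outE`. -/
structure Turn : Type where
  tri : Tri
  inE : EdgeK
  outE : EdgeK
  deriving DecidableEq

namespace Turn

def valid (n : ℕ) (t : Turn) : Prop :=
  t.tri.valid n ∧ sideOf t.inE t.tri ∧ sideOf t.outE t.tri ∧ t.inE ≠ t.outE

end Turn

/-- A turn is counterclockwise iff it goes to the clockwise-next side
(such a turn rotates counterclockwise around its pivot vertex). -/
def IsCCWTurn (t : Turn) : Prop := t.outE = cwNext t.tri t.inE

/-- A turn is clockwise iff it comes from the clockwise-next side of its exit. -/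
def IsCWTurn (t : Turn) : Prop := t.inE = cwNext t.tri t.outE

/-- The side of the triangle of a turn not used by the turn. -/
def thirdSide (t : Turn) : EdgeK :=
  if cwNext t.tri t.outE = t.inE then cwNext t.tri t.inE else cwNext t.tri t.outE

/-- A slack contribution of a rhombus: a single turn (at an acute angle) or a
concatenated pair of turns (around an obtuse angle). -/
inductive Contrib : Type
  | single (t : Turn)
  | double (t₁ t₂ : Turn)
  deriving DecidableEq

/-- The four negative slack contributions `Ψ₋(ρ)` of a rhombus: the two
counterclockwise turns at the acute angles, and the two clockwise length-4
paths around the obtuse angles. -/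
def negContrib (ρ : Rhombus) : Fin 4 → Contrib :=
  ![Contrib.single ⟨ρ.triU, cwNext ρ.triU ρ.diag, cwNext ρ.triU (cwNext ρ.triU ρ.diag)⟩,
    Contrib.single ⟨ρ.triD, cwNext ρ.triD ρ.diag, cwNext ρ.triD (cwNext ρ.triD ρ.diag)⟩,
    Contrib.double ⟨ρ.triU, cwNext ρ.triU ρ.diag, ρ.diag⟩
      ⟨ρ.triD, ρ.diag, cwNext ρ.triD (cwNext ρ.triD ρ.diag)⟩,
    Contrib.double ⟨ρ.triD, cwNext ρ.triD ρ.diag, ρ.diag⟩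
      ⟨ρ.triU, ρ.diag, cwNext ρ.triU (cwNext ρ.triU ρ.diag)⟩]

/-- The four positive slack contributions `Ψ₊(ρ)` of a rhombus: the two
clockwise turns at the acute angles, and the two counterclockwise length-4
paths around the obtuse angles. -/
def posContrib (ρ : Rhombus) : Fin 4 → Contrib :=
  ![Contrib.single ⟨ρ.triU, cwNext ρ.triU (cwNext ρ.triU ρ.diag), cwNext ρ.triU ρ.diag⟩,
    Contrib.single ⟨ρ.triD, cwNext ρ.triD (cwNext ρ.triD ρ.diag), cwNext ρ.triD ρ.diag⟩,
    Contrib.double ⟨ρ.triD, cwNext ρ.triD (cwNext ρ.triD ρ.diag), ρ.diag⟩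
      ⟨ρ.triU, ρ.diag, cwNext ρ.triU ρ.diag⟩,
    Contrib.double ⟨ρ.triU, cwNext ρ.triU (cwNext ρ.triU ρ.diag), ρ.diag⟩
      ⟨ρ.triD, ρ.diag, cwNext ρ.triD ρ.diag⟩]

/-- The antipodal contribution of the `j`-th negative slack contribution of a
rhombus: reverse it and rotate by 180°.  It is a positive contribution. -/
def antipodalContrib (ρ : Rhombus) : Fin 4 → Contrib :=
  ![posContrib ρ 1, posContrib ρ 0, posContrib ρ 3, posContrib ρ 2]

/-- The directed edges of `G` used by a turn. -/
def turnGEdges (t : Turn) : List (GVertex × GVertex) :=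
  [(GVertex.white t.inE, GVertex.black t.tri), (GVertex.black t.tri, GVertex.white t.outE)]

/-- The directed edges of `G` used by a slack contribution. -/
def Contrib.gedges : Contrib → List (GVertex × GVertex)
  | .single t => turnGEdges t
  | .double t₁ t₂ => turnGEdges t₁ ++ turnGEdges t₂

/-- The contribution `c` is contained in the support of the flow class `d`. -/
def ContribInSupp (n : ℕ) (d : Flow) (c : Contrib) : Prop :=
  ∀ p ∈ c.gedges, suppEdge n d p.1 p.2

/-- The contribution `c` is contained in (the edge set of) the cycle `l`. -/
def ContribInCycle (c : Contrib) (l : List GVertex) : Prop :=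
  ∀ p ∈ c.gedges, p ∈ cyclePairs l

/-- A cycle is `f`-hive preserving iff it uses no negative slack contribution
of an `f`-flat rhombus. -/
def CycleHivePreserving (n : ℕ) (f : Flow) (l : List GVertex) : Prop :=
  ∀ ρ : Rhombus, ρ.valid n → slack f ρ = 0 →
    ∀ j : Fin 4, ¬ ContribInCycle (negContrib ρ j) l

/-- A cycle is `f`-secure iff it is `f`-hive preserving and does not use both
counterclockwise turns at the acute angles of any nearly `f`-flat rhombus. -/
def CycleSecure (n : ℕ) (f : Flow) (l : List GVertex) : Prop :=
  CycleHivePreserving n f l ∧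
  ∀ ρ : Rhombus, ρ.valid n → slack f ρ = 1 →
    ¬ (ContribInCycle (negContrib ρ 0) l ∧ ContribInCycle (negContrib ρ 1) l)

/-! ### The digraph `R` and residual digraphs -/

/-- Vertices of the auxiliary digraph `R`: the turns, the source and the target. -/
inductive RVertex : Type
  | turn (t : Turn)
  | src
  | tgt
  deriving DecidableEq

/-- A turnedge: an ordered pair of turns whose concatenation is a path of
length 4 in `G`. -/
def TurnEdge (t₁ t₂ : Turn) : Prop :=
  t₁.outE = t₂.inE ∧ t₁.tri ≠ t₂.tri ∧ t₁.inE ≠ t₂.outE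

/-- Adjacency of the digraph `R`. -/
def RAdj (n : ℕ) (u v : RVertex) : Prop :=
  match u, v with
  | .turn t₁, .turn t₂ => t₁.valid n ∧ t₂.valid n ∧ TurnEdge t₁ t₂
  | .src, .turn t => t.valid n ∧ (onRight n t.inE ∨ onBottom n t.inE)
  | .turn t, .src => t.valid n ∧ (onRight n t.outE ∨ onBottom n t.outE)
  | .turn t, .tgt => t.valid n ∧ onLeft n t.outE
  | .tgt, .turn t => t.valid n ∧ onLeft n t.inE
  | _, _ => False

/-- A turnvertex deleted in `R_f`: a single-turn negative contribution of an
`f`-flat rhombus. -/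
def DelTurn (n : ℕ) (f : Flow) (t : Turn) : Prop :=
  ∃ ρ : Rhombus, ρ.valid n ∧ slack f ρ = 0 ∧ ∃ j : Fin 4, negContrib ρ j = Contrib.single t

/-- A turnedge deleted in `R_f`: a double negative contribution of an
`f`-flat rhombus. -/
def DelTurnEdge (n : ℕ) (f : Flow) (t₁ t₂ : Turn) : Prop :=
  ∃ ρ : Rhombus, ρ.valid n ∧ slack f ρ = 0 ∧ ∃ j : Fin 4, negContrib ρ j = Contrib.double t₁ t₂

/-- A right or bottom border edge saturated by `f`. -/
def SatRB (n : ℕ) (lam mu : ℕ → ℕ) (f : Flow) (e : EdgeK) : Prop :=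
  (∃ m, m + 1 ≤ n ∧ e = EdgeK.dr m m ∧ f.dr m m = (lam m : ℝ)) ∨
  (∃ i, i + 1 ≤ n ∧ e = EdgeK.hz n i ∧ f.hz n i = (mu (n - 1 - i) : ℝ))

/-- A left border edge saturated by `f`. -/
def SatL (n : ℕ) (nu : ℕ → ℕ) (f : Flow) (e : EdgeK) : Prop :=
  ∃ m, m + 1 ≤ n ∧ e = EdgeK.dl m 0 ∧ -(f.dl m 0) = (nu m : ℝ)

/-- Adjacency of the residual digraph `R_f`. -/
def ResidAdj (n : ℕ) (lam mu nu : ℕ → ℕ) (f : Flow) (u v : RVertex) : Prop :=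
  match u, v with
  | .turn t₁, .turn t₂ =>
      RAdj n (.turn t₁) (.turn t₂) ∧ ¬ DelTurn n f t₁ ∧ ¬ DelTurn n f t₂ ∧
        ¬ DelTurnEdge n f t₁ t₂
  | .src, .turn t => RAdj n .src (.turn t) ∧ ¬ DelTurn n f t ∧ ¬ SatRB n lam mu f t.inE
  | .turn t, .src => RAdj n (.turn t) .src ∧ ¬ DelTurn n f t ∧ ¬ SatRB n lam mu f t.outE
  | .turn t, .tgt => RAdj n (.turn t) .tgt ∧ ¬ DelTurn n f t ∧ ¬ SatL n nu f t.outE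
  | .tgt, .turn t => RAdj n .tgt (.turn t) ∧ ¬ DelTurn n f t ∧ ¬ SatL n nu f t.inE
  | _, _ => False

/-- A right or bottom border edge at which an additional unit of `2^ℓ` flow
does not fit. -/
def SatRB2 (n : ℕ) (lam mu : ℕ → ℕ) (f : Flow) (l : ℕ) (e : EdgeK) : Prop :=
  (∃ m, m + 1 ≤ n ∧ e = EdgeK.dr m m ∧ (lam m : ℝ) < f.dr m m + 2 ^ l) ∨
  (∃ i, i + 1 ≤ n ∧ e = EdgeK.hz n i ∧ (mu (n - 1 - i) : ℝ) < f.hz n i + 2 ^ l)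

/-- A left border edge at which an additional unit of `2^ℓ` flow does not fit. -/
def SatL2 (n : ℕ) (nu : ℕ → ℕ) (f : Flow) (l : ℕ) (e : EdgeK) : Prop :=
  ∃ m, m + 1 ≤ n ∧ e = EdgeK.dl m 0 ∧ (nu m : ℝ) < -(f.dl m 0) + 2 ^ l

/-- Adjacency of the residual digraph `R_f^(ℓ)`, obtained from `R_f` by
further deleting the turnedges crossing border edges without room for `2^ℓ`
additional flow. -/
def ResidAdjL (n : ℕ) (lam mu nu : ℕ → ℕ) (f : Flow) (l : ℕ) (u v : RVertex) : Prop :=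
  match u, v with
  | .src, .turn t => ResidAdj n lam mu nu f .src (.turn t) ∧ ¬ SatRB2 n lam mu f l t.inE
  | .turn t, .src => ResidAdj n lam mu nu f (.turn t) .src ∧ ¬ SatRB2 n lam mu f l t.outE
  | .turn t, .tgt => ResidAdj n lam mu nu f (.turn t) .tgt ∧ ¬ SatL2 n nu f l t.outE
  | .tgt, .turn t => ResidAdj n lam mu nu f .tgt (.turn t) ∧ ¬ SatL2 n nu f l t.inE
  | u, v => ResidAdj n lam mu nu f u v

/-- An `s`-`t`-turnpath for an adjacency relation `A` on `RVertex`. -/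
def IsSTPath (A : RVertex → RVertex → Prop) (l : List RVertex) : Prop :=
  l.Nodup ∧ l.Chain' A ∧ l.head? = some RVertex.src ∧ l.getLast? = some RVertex.tgt

/-- A `t`-`s`-turnpath. -/
def IsTSPath (A : RVertex → RVertex → Prop) (l : List RVertex) : Prop :=
  l.Nodup ∧ l.Chain' A ∧ l.head? = some RVertex.tgt ∧ l.getLast? = some RVertex.src

/-- A turncycle (which may pass through `s` or `t`). -/
def IsRCycle (A : RVertex → RVertex → Prop) (l : List RVertex) : Prop :=
  l ≠ [] ∧ l.Nodup ∧ l.Chain' A ∧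
    ∀ a b, l.getLast? = some a → l.head? = some b → A a b

/-- A complete turnpath: an `s`-`t`-turnpath, a `t`-`s`-turnpath, or a
turncycle. -/
def IsCompleteTP (A : RVertex → RVertex → Prop) (l : List RVertex) : Prop :=
  IsSTPath A l ∨ IsTSPath A l ∨ IsRCycle A l

/-- The throughput function of `π(p)` for a complete turnpath `p`
(vertex-distinct, so in/outflow at a turnvertex equals occurrence):
total flow into the two turnvertices pointing from the white vertex of the
edge into its upright triangle, minus the total flow out of the two
turnvertices pointing out of the triangle towards the edge. -/
def pathDelta (l : List RVertex) (e : EdgeK) : ℝ :=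
  (if RVertex.turn ⟨upOf e, e, cwNext (upOf e) e⟩ ∈ l then (1 : ℝ) else 0) +
  (if RVertex.turn ⟨upOf e, e, cwNext (upOf e) (cwNext (upOf e) e)⟩ ∈ l then (1 : ℝ) else 0) -
  (if RVertex.turn ⟨upOf e, cwNext (upOf e) e, e⟩ ∈ l then (1 : ℝ) else 0) -
  (if RVertex.turn ⟨upOf e, cwNext (upOf e) (cwNext (upOf e) e), e⟩ ∈ l then (1 : ℝ) else 0)

/-- The flow class `f + π(p)` for a turnpath `p`. -/
noncomputable def addPath (f : Flow) (l : List RVertex) : Flow :=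
  ⟨fun m i => f.dl m i + pathDelta l (.dl m i),
   fun m i => f.dr m i + pathDelta l (.dr m i),
   fun m i => f.hz m i + pathDelta l (.hz m i)⟩

/-! ### Flatspaces, sides, entrance and exit edges -/

/-- Two hive triangles are `f`-adjacent if they form an `f`-flat rhombus. -/
def FlatAdjTri (n : ℕ) (f : Flow) (T T' : Tri) : Prop :=
  ∃ ρ : Rhombus, ρ.valid n ∧ slack f ρ = 0 ∧
    ((T = ρ.triU ∧ T' = ρ.triD) ∨ (T = ρ.triD ∧ T' = ρ.triU))

/-- An `f`-flatspace: a connected component of the `f`-adjacency relation on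
hive triangles. -/
def IsFlatspace (n : ℕ) (f : Flow) (L : Set Tri) : Prop :=
  ∃ T : Tri, T.valid n ∧ L = {T' | Relation.ReflTransGen (FlatAdjTri n f) T T'}

/-- A valid triangle belonging to `L`. -/
def inL (n : ℕ) (L : Set Tri) (T : Tri) : Prop := T.valid n ∧ T ∈ L

/-- The downright triangle adjacent to `e` exists and belongs to `L`. -/
def dnIn (n : ℕ) (L : Set Tri) (e : EdgeK) : Prop :=
  ∃ T, dnOf? e = some T ∧ inL n L T

/-- A border edge of a set `L` of hive triangles: exactly one of its adjacent
hive triangles belongs to `L`. -/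
def BorderEdge (n : ℕ) (L : Set Tri) (e : EdgeK) : Prop :=
  e.valid n ∧ ((inL n L (upOf e) ∧ ¬ dnIn n L e) ∨ (dnIn n L e ∧ ¬ inL n L (upOf e)))

/-- The collinear successor of an edge of `Δ` along its line. -/
def lineSucc : EdgeK → EdgeK
  | .dl m i => .dl (m+1) i
  | .dr m i => .dr (m+1) (i+1)
  | .hz m i => .hz m (i+1)

/-- A side of `L`: a maximal run of consecutive collinear border edges of `L`. -/
def IsSide (n : ℕ) (L : Set Tri) (s : List EdgeK) : Prop :=
  s ≠ [] ∧ (∀ e ∈ s, BorderEdge n L e) ∧ s.Chain' (fun a b => b = lineSucc a) ∧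
  (∀ e a, s.head? = some a → lineSucc e = a → ¬ BorderEdge n L e) ∧
  (∀ a, s.getLast? = some a → ¬ BorderEdge n L (lineSucc a))

/-- The list recording a side of `L` (in `lineSucc` order) runs clockwise
around `L` (i.e. with the interior of `L` on its right). -/
def sideCW (n : ℕ) (L : Set Tri) (s : List EdgeK) : Prop :=
  ∃ e, s.head? = some e ∧
    (match e with
     | EdgeK.dr _ _ => inL n L (upOf e)
     | _ => dnIn n L e)

/-- `e` is the entrance edge of the side `s` of `L` (the first edge of the
side in clockwise order around `L`). -/
def entranceOf (n : ℕ) (L : Set Tri) (s : List EdgeK) (e : EdgeK) : Prop :=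
  (sideCW n L s ∧ s.head? = some e) ∨ (¬ sideCW n L s ∧ s.getLast? = some e)

/-- `e` is the exit edge of the side `s` of `L` (the last edge of the side in
clockwise order around `L`). -/
def exitOf (n : ℕ) (L : Set Tri) (s : List EdgeK) (e : EdgeK) : Prop :=
  (sideCW n L s ∧ s.getLast? = some e) ∨ (¬ sideCW n L s ∧ s.head? = some e)

open Classical in
/-- The throughput `δ(L,e,d)` of a flow class `d` into `L` through a border
edge `e` of `L`. -/
noncomputable def inflowEdge (n : ℕ) (L : Set Tri) (d : Flow) (e : EdgeK) : ℝ :=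
  if inL n L (upOf e) then d.thru e else -(d.thru e)

/-- `in(L,e,d)`. -/
noncomputable def inPosEdge (n : ℕ) (L : Set Tri) (d : Flow) (e : EdgeK) : ℝ :=
  max (inflowEdge n L d e) 0

/-- `out(L,e,d)`. -/
noncomputable def outPosEdge (n : ℕ) (L : Set Tri) (d : Flow) (e : EdgeK) : ℝ :=
  max (-(inflowEdge n L d e)) 0

/-- `in(L,a,d)`: the `L`-inflow of `d` through the side `a` (given as the list
of its edges). -/
noncomputable def inSide (n : ℕ) (L : Set Tri) (d : Flow) (s : List EdgeK) : ℝ :=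
  (s.map (inPosEdge n L d)).sum

/-- `out(L,a,d)`. -/
noncomputable def outSide (n : ℕ) (L : Set Tri) (d : Flow) (s : List EdgeK) : ℝ :=
  (s.map (outPosEdge n L d)).sum

/-- `v = (m,i)` is a vertex of the hive triangle `T`. -/
def vertexInTri (v : ℕ × ℕ) (T : Tri) : Prop :=
  match T with
  | .up m i => v = (m, i) ∨ v = (m+1, i) ∨ v = (m+1, i+1)
  | .down m i => v = (m, i) ∨ v = (m, i+1) ∨ v = (m+1, i+1)

/-- The six hive triangles around an interior vertex `x(m,i)`. -/
def sixAround (m i : ℕ) : List Tri :=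
  [.up m i, .down m i, .up (m-1) i, .down (m-1) (i-1), .up (m-1) (i-1), .down m (i-1)]

/-- The vertex `x(m,i)` is interior and all six hive triangles around it
belong to `L`. -/
def SurroundedVertex (n : ℕ) (L : Set Tri) (m i : ℕ) : Prop :=
  1 ≤ i ∧ i + 1 ≤ m ∧ m + 1 ≤ n ∧ ∀ T ∈ sixAround m i, T ∈ L

/-- An inner triangle of `L`: all of its vertices are surrounded by triangles
of `L`.  Triangles of `L` that are not inner are the border triangles. -/
def InnerTri (n : ℕ) (L : Set Tri) (T : Tri) : Prop :=
  ∀ m i, vertexInTri (m, i) T → SurroundedVertex n L m i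

/-- The hive triangle adjacent to `thirdSide t` on the other side of the
triangle of `t` belongs to `L`.  (For a counterclockwise turn this is the
rhombus through whose acute angle the turn passes.) -/
def acrossInL (n : ℕ) (L : Set Tri) (t : Turn) : Prop :=
  (upOf (thirdSide t) ≠ t.tri ∧ inL n L (upOf (thirdSide t))) ∨
  (∃ T', dnOf? (thirdSide t) = some T' ∧ T' ≠ t.tri ∧ inL n L T')

/-! ### Weighted families of complete turnpaths -/

/-- A weighted family of complete turnpaths for the adjacency `A`: a
nonnegative weight on lists of `R`-vertices supported on complete turnpaths. -/
def WeightedFamily (A : RVertex → RVertex → Prop) (φ : List RVertex → ℝ) : Prop :=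
  (∀ l, 0 ≤ φ l) ∧ ∀ l, ¬ IsCompleteTP A l → φ l = 0

/-- The turnpath `l` enters `L` by crossing the entrance edge of the side `s`. -/
def EntersVia (n : ℕ) (L : Set Tri) (s : List EdgeK) (l : List RVertex) : Prop :=
  ∃ e, entranceOf n L s e ∧ ∃ t : Turn, RVertex.turn t ∈ l ∧ t.inE = e ∧ inL n L t.tri

/-- The turnpath `l` exits `L` by crossing the exit edge of the side `s`. -/
def ExitsVia (n : ℕ) (L : Set Tri) (s : List EdgeK) (l : List RVertex) : Prop :=
  ∃ e, exitOf n L s e ∧ ∃ t : Turn, RVertex.turn t ∈ l ∧ t.outE = e ∧ inL n L t.tri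

/-- The entrance weight `in(L,a,φ)`. -/
noncomputable def inWeight (n : ℕ) (L : Set Tri) (s : List EdgeK)
    (φ : List RVertex → ℝ) : ℝ :=
  ∑ᶠ l ∈ {l : List RVertex | EntersVia n L s l}, φ l

/-- The exit weight `out(L,a,φ)`. -/
noncomputable def outWeight (n : ℕ) (L : Set Tri) (s : List EdgeK)
    (φ : List RVertex → ℝ) : ℝ :=
  ∑ᶠ l ∈ {l : List RVertex | ExitsVia n L s l}, φ l

/-- A flow class `d` is `f`-hive preserving if `f + ε d ∈ B(λ,μ,ν)` for all
sufficiently small `ε > 0`. -/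
def HivePreserving (n : ℕ) (lam mu nu : ℕ → ℕ) (f d : Flow) : Prop :=
  ∃ ε₀ : ℝ, 0 < ε₀ ∧ ∀ ε : ℝ, 0 < ε → ε ≤ ε₀ → MemB n lam mu nu (f + ε • d)

/-- The throughput of `π(d')` through the edge `e`, for the nonnegative flow
`d' = ∑_p φ(p)·p` on `R_f` determined by a weighted family `φ`. -/
noncomputable def wDelta (φ : List RVertex → ℝ) (e : EdgeK) : ℝ :=
  ∑ᶠ l : List RVertex, φ l * pathDelta l e

/-- The overall throughput `δ(π(d'))` of the flow `d' = ∑_p φ(p)·p` on `R_f`. -/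
noncomputable def piThr (n : ℕ) (φ : List RVertex → ℝ) : ℝ :=
  ∑ m ∈ Finset.range n, wDelta φ (.dr m m) + ∑ i ∈ Finset.range n, wDelta φ (.hz n i)

/-! ### Distance between flow classes -/

/-- The `L₁`-distance between two flow classes: the sum over the edges of `Δ`
of the absolute differences of the throughputs. -/
noncomputable def distFlow (n : ℕ) (f g : Flow) : ℝ :=
  ∑ m ∈ Finset.range (n+1), ∑ i ∈ Finset.range (n+1),
    ((if i ≤ m ∧ m + 1 ≤ n then |g.dl m i - f.dl m i| else 0) +
     (if i ≤ m ∧ m + 1 ≤ n then |g.dr m i - f.dr m i| else 0) +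
     (if i + 1 ≤ m ∧ m ≤ n then |g.hz m i - f.hz m i| else 0))

/-! ### Hives as functions on the vertices of `Δ` -/

/-- A hive on `Δ`: a function on the vertices `x(m,i)` (`i ≤ m ≤ n`) with
`h(x₀) = 0` at the top vertex, such that for every rhombus the sum of the
values at the two obtuse vertices is at least the sum at the two acute
vertices. -/
def IsHiveFn (n : ℕ) (h : ℕ → ℕ → ℝ) : Prop :=
  h 0 0 = 0 ∧
  (∀ m i, i ≤ m → m + 2 ≤ n → h m i + h (m+2) (i+1) ≤ h (m+1) i + h (m+1) (i+1)) ∧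
  (∀ m i, i + 1 ≤ m → m + 1 ≤ n → h m i + h (m+1) (i+2) ≤ h m (i+1) + h (m+1) (i+1)) ∧
  (∀ m i, i + 1 ≤ m → m + 1 ≤ n → h (m+1) i + h m (i+1) ≤ h m i + h (m+1) (i+1))

/-- A vertex of `Δ` lying on the boundary of the big triangle. -/
def BdryVtx (n : ℕ) (m i : ℕ) : Prop :=
  i ≤ m ∧ m ≤ n ∧ (i = 0 ∨ i = m ∨ m = n)

/-! ### Convex sets and canonical turnpaths -/

/-- Planar coordinates of the vertex `x(m,i)` (up to an affine change of
coordinates, which does not affect convexity). -/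
def vtxPoint (m i : ℕ) : ℝ × ℝ := (2 * (i : ℝ) - (m : ℝ), -(m : ℝ))

/-- The closed triangle in the plane corresponding to a hive triangle. -/
def triHull (T : Tri) : Set (ℝ × ℝ) :=
  match T with
  | .up m i => convexHull ℝ {vtxPoint m i, vtxPoint (m+1) i, vtxPoint (m+1) (i+1)}
  | .down m i => convexHull ℝ {vtxPoint m i, vtxPoint m (i+1), vtxPoint (m+1) (i+1)}

/-- A convex set in the triangular graph `Δ`: a nonempty union of (valid) hive
triangles that is convex as a subset of the plane. -/
def IsConvexSet (n : ℕ) (L : Set Tri) : Prop :=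
  L.Nonempty ∧ (∀ T ∈ L, T.valid n) ∧ Convex ℝ (⋃ T ∈ L, triHull T)

/-- The edge `e` belongs to (a triangle of) `L`. -/
def edgeInL (L : Set Tri) (e : EdgeK) : Prop := ∃ T ∈ L, sideOf e T

/-- A hive flow on the convex set `L`: a flow class on the subgraph `G_L`
(conservation holds at the black vertices of all triangles of `L`; values on
edges outside `L` vanish) whose slack is nonnegative on every rhombus
contained in `L`. -/
def HiveFlowOn (n : ℕ) (L : Set Tri) (d : Flow) : Prop :=
  (∀ m i, Tri.up m i ∈ L → d.dl m i + d.dr m i + d.hz (m+1) i = 0) ∧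
  (∀ m i, Tri.down m i ∈ L → d.hz m i + d.dl m (i+1) + d.dr m i = 0) ∧
  (∀ ρ : Rhombus, ρ.valid n → ρ.triU ∈ L → ρ.triD ∈ L → 0 ≤ slack d ρ) ∧
  (∀ e : EdgeK, ¬ edgeInL L e → d.thru e = 0)

/-- The two endpoints of an edge of `Δ`. -/
def edgeEnds : EdgeK → (ℕ × ℕ) × (ℕ × ℕ)
  | .dl m i => ((m, i), (m+1, i))
  | .dr m i => ((m, i), (m+1, i+1))
  | .hz m i => ((m, i), (m, i+1))

/-- `v` is an obtuse (120°) corner of `L`: exactly two triangles of `L`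
contain `v`. -/
def ObtuseCornerAt (n : ℕ) (L : Set Tri) (v : ℕ × ℕ) : Prop :=
  ∃ T₁ T₂ : Tri, T₁ ≠ T₂ ∧ inL n L T₁ ∧ inL n L T₂ ∧
    vertexInTri v T₁ ∧ vertexInTri v T₂ ∧
    ∀ T, inL n L T → vertexInTri v T → T = T₁ ∨ T = T₂

/-- Some endpoint of `e` is an obtuse corner of `L`. -/
def EndsAtObtuse (n : ℕ) (L : Set Tri) (e : EdgeK) : Prop :=
  ObtuseCornerAt n L (edgeEnds e).1 ∨ ObtuseCornerAt n L (edgeEnds e).2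

/-- A canonical turnpath of the convex set `L` (recorded by its list of
turns): either a single clockwise turn at an acute corner of `L`, or a
turnpath through the border triangles of `L`, starting at the entrance edge of
a side and ending at the exit edge of a side, traversing the border of `L`
counterclockwise (every counterclockwise turn closes off a rhombus leaving
`L`), never using two consecutive clockwise turns, and using two consecutive
counterclockwise turns only to go around an obtuse corner of `L`. -/
def CanonicalTP (n : ℕ) (L : Set Tri) (p : List Turn) : Prop :=
  (∃ t, p = [t] ∧ t.valid n ∧ t.tri ∈ L ∧ IsCWTurn t ∧
    BorderEdge n L t.inE ∧ BorderEdge n L t.outE) ∨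
  (2 ≤ p.length ∧
    (∀ t ∈ p, t.valid n ∧ inL n L t.tri ∧ ¬ InnerTri n L t.tri) ∧
    p.Chain' (fun t t' => TurnEdge t t' ∧ ¬ BorderEdge n L t.outE ∧
      ¬ (IsCWTurn t ∧ IsCWTurn t') ∧
      (IsCCWTurn t ∧ IsCCWTurn t' → EndsAtObtuse n L t.outE)) ∧
    (∀ t ∈ p, IsCCWTurn t → ¬ acrossInL n L t) ∧
    (∀ t, p.head? = some t → ∃ s, IsSide n L s ∧ entranceOf n L s t.inE) ∧
    (∀ t, p.getLast? = some t → ∃ s, IsSide n L s ∧ exitOf n L s t.outE))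

/-- A multiset of canonical turnpaths of `L`. -/
def MultisetCanonical (n : ℕ) (L : Set Tri) (φ : List Turn → ℕ) : Prop :=
  ∀ p, φ p ≠ 0 → CanonicalTP n L p

/-- `in(L,a,φ)`: the number, counted with multiplicity, of canonical
turnpaths of `φ` starting at the entrance edge of the side `a = s`. -/
noncomputable def inMs (n : ℕ) (L : Set Tri) (s : List EdgeK) (φ : List Turn → ℕ) : ℝ :=
  ∑ᶠ p ∈ {p : List Turn | ∃ t, p.head? = some t ∧ entranceOf n L s t.inE}, (φ p : ℝ)

/-- `out(L,a,φ)`: the number, counted with multiplicity, of canonical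
turnpaths of `φ` ending at the exit edge of the side `a = s`. -/
noncomputable def outMs (n : ℕ) (L : Set Tri) (s : List EdgeK) (φ : List Turn → ℕ) : ℝ :=
  ∑ᶠ p ∈ {p : List Turn | ∃ t, p.getLast? = some t ∧ exitOf n L s t.outE}, (φ p : ℝ)

end LRFlows

namespace LRFlows

/-! ### Auxiliary infrastructure for the flatspace traversal theorem -/

section Aux

open EdgeK Tri

@[simp] lemma cwNext_up_dr (m i : ℕ) : cwNext (.up m i) (.dr m i) = .hz (m+1) i := by
  simp [cwNext]

@[simp] lemma cwNext_up_hz (m i : ℕ) : cwNext (.up m i) (.hz (m+1) i) = .dl m i := by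
  simp [cwNext]

@[simp] lemma cwNext_up_dl (m i : ℕ) : cwNext (.up m i) (.dl m i) = .dr m i := by
  simp [cwNext]

@[simp] lemma cwNext_dn_hz (m i : ℕ) : cwNext (.down m i) (.hz m i) = .dl m (i+1) := by
  simp [cwNext]

@[simp] lemma cwNext_dn_dl (m i : ℕ) : cwNext (.down m i) (.dl m (i+1)) = .dr m i := by
  simp [cwNext]

@[simp] lemma cwNext_dn_dr (m i : ℕ) : cwNext (.down m i) (.dr m i) = .hz m i := by
  simp [cwNext]

lemma sideOf_cases {e : EdgeK} {T : Tri} (h : sideOf e T) :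
    T = upOf e ∨ dnOf? e = some T := by
  rcases T with ⟨m, i⟩ | ⟨m, i⟩ <;> simp [sideOf, Tri.sides] at h <;>
    rcases h with rfl | rfl | rfl <;> simp [upOf, dnOf?]

lemma sideOf_unique {e : EdgeK} {T₁ T₂ T₃ : Tri} (h1 : sideOf e T₁) (h2 : sideOf e T₂)
    (h3 : sideOf e T₃) (h13 : T₁ ≠ T₃) (h23 : T₂ ≠ T₃) : T₁ = T₂ := by
  rcases sideOf_cases h3 with e3 | e3
  · subst e3
    rcases sideOf_cases h1 with e1 | e1
    · exact absurd e1 h13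
    · rcases sideOf_cases h2 with e2 | e2
      · exact absurd e2 h23
      · exact Option.some_injective _ (e1.symm.trans e2)
  · rcases sideOf_cases h1 with e1 | e1
    · rcases sideOf_cases h2 with e2 | e2
      · exact e1.trans e2.symm
      · exact absurd (Option.some_injective _ (e2.symm.trans e3)) h23
    · exact absurd (Option.some_injective _ (e1.symm.trans e3)) h13

lemma isCCW_or_isCW {n : ℕ} {t : Turn} (hv : t.valid n) : IsCCWTurn t ∨ IsCWTurn t := by
  obtain ⟨tri, inE, outE⟩ := t
  obtain ⟨htri, hin, hout, hne⟩ := hv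
  rcases tri with ⟨m, i⟩ | ⟨m, i⟩ <;> simp [sideOf, Tri.sides] at hin hout <;>
    rcases hin with rfl | rfl | rfl <;> rcases hout with rfl | rfl | rfl <;>
    simp_all [IsCCWTurn, IsCWTurn]

end Aux

section GFun

/-- The "gradient" data of a triangle: the throughputs of its three sides. -/
noncomputable def gfun (f : Flow) : Tri → ℝ × ℝ × ℝ
  | .up m i => (f.dl m i, f.dr m i, f.hz (m+1) i)
  | .down m i => (f.dl m (i+1), f.dr m i, f.hz m i)

lemma rhombus_tri_valid {n : ℕ} {ρ : Rhombus} (h : ρ.valid n) :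
    ρ.triU.valid n ∧ ρ.triD.valid n := by
  rcases ρ with ⟨m, i⟩ | ⟨m, i⟩ | ⟨m, i⟩ <;> simp [Rhombus.valid] at h <;>
    simp [Rhombus.triU, Rhombus.triD, Tri.valid] <;> omega

lemma gfun_eq_of_adj {n : ℕ} {f : Flow} {T T' : Tri} (hflow : IsFlow n f)
    (h : FlatAdjTri n f T T') : gfun f T = gfun f T' := by
  obtain ⟨ρ, hv, hs, hc⟩ := h
  have key : gfun f ρ.triU = gfun f ρ.triD := by
    rcases ρ with ⟨m, i⟩ | ⟨m, i⟩ | ⟨m, i⟩ <;> simp [Rhombus.valid] at hv <;>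
      simp [slack] at hs <;>
      simp only [gfun, Rhombus.triU, Rhombus.triD, Prod.mk.injEq]
    · have l1 := hflow.1 m i hv.1 (by omega)
      have l2 := hflow.2 (m+1) i (by omega) (by omega)
      refine ⟨?_, ?_, ?_⟩ <;> first | trivial | linarith
    · have l1 := hflow.1 m (i+1) hv.1 hv.2
      have l2 := hflow.2 m i hv.1 hv.2
      refine ⟨?_, ?_, ?_⟩ <;> first | trivial | linarith
    · have l1 := hflow.1 m i (by omega) hv.2
      have l2 := hflow.2 m i hv.1 hv.2
      refine ⟨?_, ?_, ?_⟩ <;> first | trivial | linarith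
  rcases hc with ⟨rfl, rfl⟩ | ⟨rfl, rfl⟩
  · exact key
  · exact key.symm

/-- Bundled facts about an `f`-flatspace `L`. -/
structure FlatCtx (n : ℕ) (f : Flow) (L : Set Tri) : Prop where
  flow : IsFlow n f
  hive : ∀ ρ : Rhombus, ρ.valid n → 0 ≤ slack f ρ
  memv : ∀ T ∈ L, Tri.valid n T
  adj : ∀ T T', T ∈ L → FlatAdjTri n f T T' → T' ∈ L
  geq : ∀ T ∈ L, ∀ T' ∈ L, gfun f T = gfun f T'

lemma flatCtx_of {n : ℕ} {lam mu nu : ℕ → ℕ} {f : Flow} {L : Set Tri}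
    (hf : MemB n lam mu nu f) (hL : IsFlatspace n f L) : FlatCtx n f L := by
  obtain ⟨T₀, hT₀v, rfl⟩ := hL
  have hflow : IsFlow n f := hf.2.1.1
  have hgr : ∀ T, Relation.ReflTransGen (FlatAdjTri n f) T₀ T → gfun f T₀ = gfun f T := by
    intro T h
    induction h with
    | refl => rfl
    | tail h1 h2 ih => exact ih.trans (gfun_eq_of_adj hflow h2)
  refine ⟨hflow, hf.2.1.2, ?_, ?_, ?_⟩
  · intro T hT
    induction hT with
    | refl => exact hT₀v
    | tail h1 h2 ih =>
      obtain ⟨ρ, hv, _, hc⟩ := h2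
      rcases hc with ⟨_, rfl⟩ | ⟨_, rfl⟩
      · exact (rhombus_tri_valid hv).2
      · exact (rhombus_tri_valid hv).1
  · intro T T' hT hadj
    exact Relation.ReflTransGen.tail hT hadj
  · intro T hT T' hT'
    exact (hgr T hT).symm.trans (hgr T' hT')

variable {n : ℕ} {f : Flow} {L : Set Tri}

lemma FlatCtx.inL_of_mem (C : FlatCtx n f L) {T : Tri} (h : T ∈ L) : inL n L T :=
  ⟨C.memv T h, h⟩

lemma FlatCtx.flat (C : FlatCtx n f L) {ρ : Rhombus} (hv : ρ.valid n)
    (hU : ρ.triU ∈ L) (hD : ρ.triD ∈ L) : slack f ρ = 0 := by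
  have h := C.geq _ hU _ hD
  rcases ρ with ⟨m, i⟩ | ⟨m, i⟩ | ⟨m, i⟩ <;>
    simp only [gfun, Rhombus.triU, Rhombus.triD, Prod.mk.injEq] at h <;>
    simp [slack] <;> obtain ⟨a, b, c⟩ := h <;> linarith

lemma FlatCtx.memD (C : FlatCtx n f L) {ρ : Rhombus} (hv : ρ.valid n)
    (hs : slack f ρ = 0) (hU : ρ.triU ∈ L) : ρ.triD ∈ L :=
  C.adj _ _ hU ⟨ρ, hv, hs, Or.inl ⟨rfl, rfl⟩⟩

lemma FlatCtx.memU (C : FlatCtx n f L) {ρ : Rhombus} (hv : ρ.valid n)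
    (hs : slack f ρ = 0) (hD : ρ.triD ∈ L) : ρ.triU ∈ L :=
  C.adj _ _ hD ⟨ρ, hv, hs, Or.inr ⟨rfl, rfl⟩⟩

end GFun

section Paths

lemma chain'_pred {α : Type} {A : α → α → Prop} {l : List α} (hc : l.Chain' A) {x : α}
    (hx : x ∈ l) : l.head? = some x ∨ ∃ y, A y x := by
  obtain ⟨⟨i, hi⟩, rfl⟩ := List.mem_iff_get.mp hx
  cases i with
  | zero =>
    left
    rw [List.head?_eq_getElem?, List.getElem?_eq_getElem hi]
    simp [List.get_eq_getElem]
  | succ j =>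
    right
    exact ⟨l.get ⟨j, by omega⟩, List.isChain_iff_getElem.mp hc j (by omega)⟩

lemma chain'_succ {α : Type} {A : α → α → Prop} {l : List α} (hc : l.Chain' A) {x : α}
    (hx : x ∈ l) : l.getLast? = some x ∨ ∃ y, A x y := by
  obtain ⟨⟨i, hi⟩, rfl⟩ := List.mem_iff_get.mp hx
  by_cases h : i + 1 < l.length
  · right
    exact ⟨l.get ⟨i + 1, h⟩, List.isChain_iff_getElem.mp hc i (by omega)⟩
  · left
    have hi' : i = l.length - 1 := by omega
    subst hi'
    rw [List.getLast?_eq_getElem?, List.getElem?_eq_getElem hi]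
    simp [List.get_eq_getElem]

lemma exists_pred_of_mem {A : RVertex → RVertex → Prop} {p : List RVertex}
    (hp : IsCompleteTP A p) {t : Turn} (ht : RVertex.turn t ∈ p) :
    ∃ y, A y (RVertex.turn t) := by
  rcases hp with ⟨hnd, hc, hh, hl⟩ | ⟨hnd, hc, hh, hl⟩ | ⟨hne, hnd, hc, hcyc⟩
  · rcases chain'_pred hc ht with h | h
    · rw [hh] at h; simp at h
    · exact h
  · rcases chain'_pred hc ht with h | h
    · rw [hh] at h; simp at h
    · exact h
  · rcases chain'_pred hc ht with h | h
    · exact ⟨_, hcyc _ _ (List.getLast?_eq_getLast hne) h⟩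
    · exact h

lemma exists_succ_of_mem {A : RVertex → RVertex → Prop} {p : List RVertex}
    (hp : IsCompleteTP A p) {t : Turn} (ht : RVertex.turn t ∈ p) :
    ∃ y, A (RVertex.turn t) y := by
  rcases hp with ⟨hnd, hc, hh, hl⟩ | ⟨hnd, hc, hh, hl⟩ | ⟨hne, hnd, hc, hcyc⟩
  · rcases chain'_succ hc ht with h | h
    · rw [hl] at h; simp at h
    · exact h
  · rcases chain'_succ hc ht with h | h
    · rw [hl] at h; simp at h
    · exact h
  · rcases chain'_succ hc ht with h | h
    · exact ⟨_, hcyc _ _ h (List.head?_eq_head hne)⟩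
    · exact h

variable {n : ℕ} {lam mu nu : ℕ → ℕ} {f : Flow}

lemma resid_to_facts {y : RVertex} {t : Turn}
    (h : ResidAdj n lam mu nu f y (RVertex.turn t)) : t.valid n ∧ ¬ DelTurn n f t := by
  rcases y with t₁ | _ | _
  · exact ⟨h.1.2.1, h.2.2.1⟩
  · exact ⟨h.1.1, h.2.1⟩
  · exact ⟨h.1.1, h.2.1⟩

lemma resid_from_facts {y : RVertex} {t : Turn}
    (h : ResidAdj n lam mu nu f (RVertex.turn t) y) : t.valid n ∧ ¬ DelTurn n f t := by
  rcases y with t₁ | _ | _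
  · exact ⟨h.1.1, h.2.1⟩
  · exact ⟨h.1.1, h.2.1⟩
  · exact ⟨h.1.1, h.2.1⟩

lemma tp_facts {p : List RVertex} (hp : IsCompleteTP (ResidAdj n lam mu nu f) p)
    {t : Turn} (ht : RVertex.turn t ∈ p) : t.valid n ∧ ¬ DelTurn n f t := by
  obtain ⟨y, hy⟩ := exists_pred_of_mem hp ht
  exact resid_to_facts hy

lemma cwNext3 {T : Tri} {e : EdgeK} (he : sideOf e T) :
    cwNext T (cwNext T (cwNext T e)) = e := by
  rcases T with ⟨m, i⟩ | ⟨m, i⟩ <;> simp [sideOf, Tri.sides] at he <;>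
    rcases he with rfl | rfl | rfl <;> simp

lemma cwNext_side {T : Tri} {e : EdgeK} (he : sideOf e T) : sideOf (cwNext T e) T := by
  rcases T with ⟨m, i⟩ | ⟨m, i⟩ <;> simp [sideOf, Tri.sides] at he <;>
    rcases he with rfl | rfl | rfl <;> simp [sideOf, Tri.sides]

lemma delTurn_of_U {ρ : Rhombus} (hv : ρ.valid n) (hs : slack f ρ = 0) :
    DelTurn n f ⟨ρ.triU, cwNext ρ.triU ρ.diag, cwNext ρ.triU (cwNext ρ.triU ρ.diag)⟩ :=
  ⟨ρ, hv, hs, 0, by simp [negContrib]⟩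

lemma delTurn_of_D {ρ : Rhombus} (hv : ρ.valid n) (hs : slack f ρ = 0) :
    DelTurn n f ⟨ρ.triD, cwNext ρ.triD ρ.diag, cwNext ρ.triD (cwNext ρ.triD ρ.diag)⟩ :=
  ⟨ρ, hv, hs, 1, by simp [negContrib]⟩

lemma delTurnEdge_of_U {ρ : Rhombus} (hv : ρ.valid n) (hs : slack f ρ = 0) :
    DelTurnEdge n f ⟨ρ.triU, cwNext ρ.triU ρ.diag, ρ.diag⟩
      ⟨ρ.triD, ρ.diag, cwNext ρ.triD (cwNext ρ.triD ρ.diag)⟩ :=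
  ⟨ρ, hv, hs, 2, by simp [negContrib]⟩

lemma delTurnEdge_of_D {ρ : Rhombus} (hv : ρ.valid n) (hs : slack f ρ = 0) :
    DelTurnEdge n f ⟨ρ.triD, cwNext ρ.triD ρ.diag, ρ.diag⟩
      ⟨ρ.triU, ρ.diag, cwNext ρ.triU (cwNext ρ.triU ρ.diag)⟩ :=
  ⟨ρ, hv, hs, 3, by simp [negContrib]⟩

end Paths

section PatternX

variable {n : ℕ} {lam mu nu : ℕ → ℕ} {f : Flow} {L : Set Tri}

lemma ccw_delTurn (C : FlatCtx n f L) {t : Turn} (hv : t.valid n)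
    (hmem : t.tri ∈ L) (hccw : IsCCWTurn t) (hacr : acrossInL n L t) : DelTurn n f t := by
  obtain ⟨tri, inE, outE⟩ := t
  obtain ⟨htri, hin, hout, hne⟩ := hv
  simp only [IsCCWTurn] at hccw
  dsimp only at hccw hin hout hne hmem hacr htri ⊢
  subst hccw
  rcases tri with ⟨m, i⟩ | ⟨m, i⟩ <;> simp only [sideOf, Tri.sides, List.mem_cons,
      List.mem_singleton, List.not_mem_nil, or_false] at hin <;>
    rcases hin with rfl | rfl | rfl
  · -- up, inE = dr m i, outE = hz (m+1) i, thirdSide = dl m i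
    simp only [acrossInL, thirdSide, cwNext_up_dr, cwNext_up_hz, cwNext_up_dl,
      upOf, dnOf?] at hacr
    rcases hacr with ⟨hne', -⟩ | ⟨T', hT', -, hinL⟩
    · simp at hne'
    · by_cases hi : i = 0
      · subst hi; simp at hT'
      · obtain ⟨j, rfl⟩ : ∃ j, i = j + 1 := ⟨i - 1, by omega⟩
        simp at hT'
        subst hT'
        have hρv : (Rhombus.dlD m j).valid n := by
          have := hinL.1; simp [Tri.valid] at this; simp [Rhombus.valid]; omega
        have := delTurn_of_U (f := f) hρv (C.flat hρv hmem hinL.2)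
        simpa [Rhombus.triU, Rhombus.diag] using this
  · -- up, inE = hz (m+1) i, outE = dl m i, thirdSide = dr m i
    simp only [acrossInL, thirdSide, cwNext_up_dr, cwNext_up_hz, cwNext_up_dl,
      upOf, dnOf?] at hacr
    rcases hacr with ⟨hne', -⟩ | ⟨T', hT', -, hinL⟩
    · simp at hne'
    · simp at hT'
      subst hT'
      have hρv : (Rhombus.drD m i).valid n := by
        have := hinL.1; simp [Tri.valid] at this; simp [Rhombus.valid]; omega
      have := delTurn_of_U (f := f) hρv (C.flat hρv hmem hinL.2)
      simpa [Rhombus.triU, Rhombus.diag] using this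
  · -- up, inE = dl m i, outE = dr m i, thirdSide = hz (m+1) i
    simp only [acrossInL, thirdSide, cwNext_up_dr, cwNext_up_hz, cwNext_up_dl,
      upOf, dnOf?] at hacr
    rcases hacr with ⟨hne', -⟩ | ⟨T', hT', -, hinL⟩
    · simp at hne'
    · simp at hT'
      subst hT'
      have hρv : (Rhombus.hzD m i).valid n := by
        have := hinL.1; simp [Tri.valid] at this; simp [Rhombus.valid]; omega
      have := delTurn_of_U (f := f) hρv (C.flat hρv hmem hinL.2)
      simpa [Rhombus.triU, Rhombus.diag] using this
  · -- down, inE = hz m i, outE = dl m (i+1), thirdSide = dr m i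
    simp only [acrossInL, thirdSide, cwNext_dn_hz, cwNext_dn_dl, cwNext_dn_dr,
      upOf, dnOf?] at hacr
    rcases hacr with ⟨-, hinL⟩ | ⟨T', hT', hne', -⟩
    · have hρv : (Rhombus.drD m i).valid n := by
        have := htri; simp [Tri.valid] at this; simp [Rhombus.valid]; omega
      have := delTurn_of_D (f := f) hρv (C.flat hρv hinL.2 hmem)
      simpa [Rhombus.triD, Rhombus.diag] using this
    · simp at hT'; exact absurd hT'.symm hne'
  · -- down, inE = dl m (i+1), outE = dr m i, thirdSide = hz m i
    have hm1 : 1 ≤ m := by simp [Tri.valid] at htri; omega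
    obtain ⟨k, rfl⟩ : ∃ k, m = k + 1 := ⟨m - 1, by omega⟩
    simp only [acrossInL, thirdSide, cwNext_dn_hz, cwNext_dn_dl, cwNext_dn_dr,
      upOf, dnOf?] at hacr
    rcases hacr with ⟨-, hinL⟩ | ⟨T', hT', hne', -⟩
    · have hρv : (Rhombus.hzD k i).valid n := by
        have h1 := htri; have h2 := hinL.1
        simp [Tri.valid] at h1 h2; simp [Rhombus.valid]; omega
      have := delTurn_of_D (f := f) hρv (C.flat hρv hinL.2 hmem)
      simpa [Rhombus.triD, Rhombus.diag] using this
    · simp at hT'; exact absurd hT'.symm hne'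
  · -- down, inE = dr m i, outE = hz m i, thirdSide = dl m (i+1)
    simp only [acrossInL, thirdSide, cwNext_dn_hz, cwNext_dn_dl, cwNext_dn_dr,
      upOf, dnOf?] at hacr
    rcases hacr with ⟨-, hinL⟩ | ⟨T', hT', hne', -⟩
    · have hρv : (Rhombus.dlD m i).valid n := by
        have := htri; simp [Tri.valid] at this; simp [Rhombus.valid]; omega
      have := delTurn_of_D (f := f) hρv (C.flat hρv hinL.2 hmem)
      simpa [Rhombus.triD, Rhombus.diag] using this
    · simp at hT'; exact absurd hT'.symm hne'

end PatternX

section PatternY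

variable {n : ℕ} {f : Flow} {L : Set Tri}

lemma cwcw_delTurnEdge (C : FlatCtx n f L) {t t' : Turn} (hv : t.valid n) (hv' : t'.valid n)
    (hte : TurnEdge t t') (hcw : IsCWTurn t) (hcw' : IsCWTurn t')
    (hm : t.tri ∈ L) (hm' : t'.tri ∈ L) : DelTurnEdge n f t t' := by
  obtain ⟨tri, inE, outE⟩ := t
  obtain ⟨tri', inE', outE'⟩ := t'
  obtain ⟨heq, hnet, -⟩ := hte
  obtain ⟨htri, -, hout, -⟩ := hv
  obtain ⟨htri', -, hout', -⟩ := hv'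
  simp only [IsCWTurn] at hcw hcw'
  dsimp only at hcw hcw' heq hnet hm hm' hout hout' htri htri' ⊢
  subst hcw
  subst hcw'
  rcases tri with ⟨a, b⟩ | ⟨a, b⟩ <;> rcases tri' with ⟨c, d⟩ | ⟨c, d⟩ <;>
    simp only [sideOf, Tri.sides, List.mem_cons, List.mem_singleton,
      List.not_mem_nil, or_false] at hout hout' <;>
    rcases hout with rfl | rfl | rfl <;> rcases hout' with rfl | rfl | rfl <;>
    simp only [cwNext_up_dr, cwNext_up_hz, cwNext_up_dl, cwNext_dn_hz, cwNext_dn_dl,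
      cwNext_dn_dr] at heq hnet ⊢ <;>
    simp at heq
  case up.up.inr.inl.inl =>
    obtain ⟨h1, rfl⟩ := heq
    obtain rfl : a = c := by omega
    exact absurd rfl hnet
  case up.up.inl.inr.inr =>
    obtain ⟨rfl, rfl⟩ := heq
    exact absurd rfl hnet
  case up.up.inr.inr.inr.inl =>
    obtain ⟨rfl, rfl⟩ := heq
    exact absurd rfl hnet
  case down.down.inl.inr.inr =>
    obtain ⟨rfl, rfl⟩ := heq
    exact absurd rfl hnet
  case down.down.inr.inl.inl =>
    obtain ⟨rfl, h1⟩ := heq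
    obtain rfl : b = d := by omega
    exact absurd rfl hnet
  case down.down.inr.inr.inr.inl =>
    obtain ⟨rfl, rfl⟩ := heq
    exact absurd rfl hnet
  case up.down.inl.inr.inl =>
    obtain ⟨rfl, rfl⟩ := heq
    have hρv : (Rhombus.drD a b).valid n := by
      simp [Tri.valid] at htri'; simp [Rhombus.valid]; omega
    have := delTurnEdge_of_U (f := f) hρv (C.flat hρv hm hm')
    simpa [Rhombus.triU, Rhombus.triD, Rhombus.diag] using this
  case up.down.inr.inl.inr.inr =>
    obtain ⟨h1, rfl⟩ := heq
    obtain rfl : c = a + 1 := by omega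
    have hρv : (Rhombus.hzD a b).valid n := by
      simp [Tri.valid] at htri htri'; simp [Rhombus.valid]; omega
    have := delTurnEdge_of_U (f := f) hρv (C.flat hρv hm hm')
    simpa [Rhombus.triU, Rhombus.triD, Rhombus.diag] using this
  case up.down.inr.inr.inl =>
    obtain ⟨rfl, rfl⟩ := heq
    have hρv : (Rhombus.dlD a d).valid n := by
      simp [Tri.valid] at htri'; simp [Rhombus.valid]; omega
    have := delTurnEdge_of_U (f := f) hρv (C.flat hρv hm hm')
    simpa [Rhombus.triU, Rhombus.triD, Rhombus.diag] using this
  case down.up.inl.inl =>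
    obtain ⟨h1, rfl⟩ := heq
    obtain rfl : a = c + 1 := by omega
    have hρv : (Rhombus.hzD c b).valid n := by
      simp [Tri.valid] at htri htri'; simp [Rhombus.valid]; omega
    have := delTurnEdge_of_D (f := f) hρv (C.flat hρv hm' hm)
    simpa [Rhombus.triU, Rhombus.triD, Rhombus.diag] using this
  case down.up.inr.inl.inr.inl =>
    obtain ⟨rfl, rfl⟩ := heq
    have hρv : (Rhombus.dlD a b).valid n := by
      simp [Tri.valid] at htri; simp [Rhombus.valid]; omega
    have := delTurnEdge_of_D (f := f) hρv (C.flat hρv hm' hm)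
    simpa [Rhombus.triU, Rhombus.triD, Rhombus.diag] using this
  case down.up.inr.inr.inr.inr =>
    obtain ⟨rfl, rfl⟩ := heq
    have hρv : (Rhombus.drD a b).valid n := by
      simp [Tri.valid] at htri; simp [Rhombus.valid]; omega
    have := delTurnEdge_of_D (f := f) hρv (C.flat hρv hm' hm)
    simpa [Rhombus.triU, Rhombus.triD, Rhombus.diag] using this

end PatternY

section CWStep

variable {n : ℕ} {lam mu nu : ℕ → ℕ} {f : Flow} {L : Set Tri} {p : List RVertex}

lemma cw_succ_false (C : FlatCtx n f L)
    (hp : IsCompleteTP (ResidAdj n lam mu nu f) p) {t : Turn}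
    (htp : RVertex.turn t ∈ p) (hcw : IsCWTurn t) (hm : t.tri ∈ L)
    {T' : Tri} (hT's : sideOf t.outE T') (hT'ne : T' ≠ t.tri) (hT'm : T' ∈ L)
    (hacr : acrossInL n L ⟨T', t.outE, cwNext T' t.outE⟩) : False := by
  obtain ⟨y, hy⟩ := exists_succ_of_mem hp htp
  have hv : t.valid n := (resid_from_facts hy).1
  rcases y with t' | _ | _
  · obtain ⟨⟨hv1, hv2, hte⟩, hd1, hd2, hdte⟩ := hy
    have hst' : sideOf t.outE t'.tri := hte.1 ▸ hv2.2.1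
    have htt : t'.tri = T' := sideOf_unique hst' hT's hv.2.2.1 (Ne.symm hte.2.1) hT'ne
    rcases isCCW_or_isCW hv2 with hccw' | hcw'
    · refine hd2 (ccw_delTurn C hv2 (htt ▸ hT'm) hccw' ?_)
      have ht'eq : t' = ⟨T', t.outE, cwNext T' t.outE⟩ := by
        obtain ⟨tri', inE', outE'⟩ := t'
        subst htt
        have h1 : inE' = t.outE := hte.1.symm
        subst h1
        simp only [IsCCWTurn] at hccw'
        subst hccw'
        rfl
      rw [ht'eq]
      exact hacr
    · exact hdte (cwcw_delTurnEdge C hv1 hv2 hte hcw hcw' hm (htt ▸ hT'm))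
  · obtain ⟨⟨hv1, hob⟩, -⟩ := hy
    have hTv : T'.valid n := C.memv _ hT'm
    rcases hob with ⟨k, hk, hek⟩ | ⟨k, hk, hek⟩ <;> rw [hek] at hT's <;>
      have hs2 : sideOf t.outE t.tri := hv.2.2.1 <;> rw [hek] at hs2 <;>
      rcases sideOf_cases hT's with h1 | h1 <;> rcases sideOf_cases hs2 with h2 | h2
    · exact hT'ne (h1.trans h2.symm)
    · rw [show dnOf? (EdgeK.dr k k) = some (Tri.down k k) from rfl] at h2
      have := hv.1; rw [Option.some_injective _ h2.symm] at this
      simp only [Tri.valid] at this; omega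
    · rw [show dnOf? (EdgeK.dr k k) = some (Tri.down k k) from rfl] at h1
      rw [Option.some_injective _ h1.symm] at hTv
      simp only [Tri.valid] at hTv; omega
    · exact hT'ne (Option.some_injective _ (h1.symm.trans h2))
    · exact hT'ne (h1.trans h2.symm)
    · rw [show dnOf? (EdgeK.hz n k) = some (Tri.down n k) from rfl] at h2
      have := hv.1; rw [Option.some_injective _ h2.symm] at this
      simp only [Tri.valid] at this; omega
    · rw [show dnOf? (EdgeK.hz n k) = some (Tri.down n k) from rfl] at h1
      rw [Option.some_injective _ h1.symm] at hTv
      simp only [Tri.valid] at hTv; omega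
    · exact hT'ne (Option.some_injective _ (h1.symm.trans h2))
  · obtain ⟨⟨hv1, hol⟩, -⟩ := hy
    obtain ⟨k, hk, hek⟩ := hol
    rw [hek] at hT's
    have hs2 : sideOf t.outE t.tri := hv.2.2.1
    rw [hek] at hs2
    rcases sideOf_cases hT's with h1 | h1 <;> rcases sideOf_cases hs2 with h2 | h2
    · exact hT'ne (h1.trans h2.symm)
    · simp [dnOf?] at h2
    · simp [dnOf?] at h1
    · simp [dnOf?] at h1

lemma cw_pred_false (C : FlatCtx n f L)
    (hp : IsCompleteTP (ResidAdj n lam mu nu f) p) {t : Turn}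
    (htp : RVertex.turn t ∈ p) (hcw : IsCWTurn t) (hm : t.tri ∈ L)
    {T₀ : Tri} (hT's : sideOf t.inE T₀) (hT'ne : T₀ ≠ t.tri) (hT'm : T₀ ∈ L)
    (hacr : acrossInL n L ⟨T₀, cwNext T₀ (cwNext T₀ t.inE), t.inE⟩) : False := by
  obtain ⟨y, hy⟩ := exists_pred_of_mem hp htp
  have hv : t.valid n := (resid_to_facts hy).1
  rcases y with t₀ | _ | _
  · obtain ⟨⟨hv1, hv2, hte⟩, hd1, hd2, hdte⟩ := hy
    have hst' : sideOf t.inE t₀.tri := hte.1 ▸ hv1.2.2.1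
    have htt : t₀.tri = T₀ := sideOf_unique hst' hT's hv.2.1 (hte.2.1) hT'ne
    rcases isCCW_or_isCW hv1 with hccw' | hcw' 
    · refine hd1 (ccw_delTurn C hv1 (htt ▸ hT'm) hccw' ?_)
      have ht'eq : t₀ = ⟨T₀, cwNext T₀ (cwNext T₀ t.inE), t.inE⟩ := by
        obtain ⟨tri', inE', outE'⟩ := t₀
        have h1 : outE' = t.inE := hte.1
        subst h1
        subst htt
        simp only [IsCCWTurn] at hccw'
        have hside : sideOf inE' tri' := hv1.2.1
        have h2 : cwNext tri' (cwNext tri' (cwNext tri' inE')) = inE' := cwNext3 hside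
        congr 1
        show inE' = cwNext tri' (cwNext tri' t.inE)
        rw [hccw']
        exact h2.symm
      rw [ht'eq]
      exact hacr
    · exact hdte (cwcw_delTurnEdge C hv1 hv2 hte hcw' hcw (htt ▸ hT'm) hm)
  · obtain ⟨⟨hv1, hob⟩, -⟩ := hy
    have hTv : T₀.valid n := C.memv _ hT'm
    rcases hob with ⟨k, hk, hek⟩ | ⟨k, hk, hek⟩ <;> rw [hek] at hT's <;>
      have hs2 : sideOf t.inE t.tri := hv.2.1 <;> rw [hek] at hs2 <;>
      rcases sideOf_cases hT's with h1 | h1 <;> rcases sideOf_cases hs2 with h2 | h2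
    · exact hT'ne (h1.trans h2.symm)
    · rw [show dnOf? (EdgeK.dr k k) = some (Tri.down k k) from rfl] at h2
      have := hv.1; rw [Option.some_injective _ h2.symm] at this
      simp only [Tri.valid] at this; omega
    · rw [show dnOf? (EdgeK.dr k k) = some (Tri.down k k) from rfl] at h1
      rw [Option.some_injective _ h1.symm] at hTv
      simp only [Tri.valid] at hTv; omega
    · exact hT'ne (Option.some_injective _ (h1.symm.trans h2))
    · exact hT'ne (h1.trans h2.symm)
    · rw [show dnOf? (EdgeK.hz n k) = some (Tri.down n k) from rfl] at h2
      have := hv.1; rw [Option.some_injective _ h2.symm] at this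
      simp only [Tri.valid] at this; omega
    · rw [show dnOf? (EdgeK.hz n k) = some (Tri.down n k) from rfl] at h1
      rw [Option.some_injective _ h1.symm] at hTv
      simp only [Tri.valid] at hTv; omega
    · exact hT'ne (Option.some_injective _ (h1.symm.trans h2))
  · obtain ⟨⟨hv1, hol⟩, -⟩ := hy
    obtain ⟨k, hk, hek⟩ := hol
    rw [hek] at hT's
    have hs2 : sideOf t.inE t.tri := hv.2.1
    rw [hek] at hs2
    rcases sideOf_cases hT's with h1 | h1 <;> rcases sideOf_cases hs2 with h2 | h2
    · exact hT'ne (h1.trans h2.symm)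
    · simp [dnOf?] at h2
    · simp [dnOf?] at h1
    · simp [dnOf?] at h1

end CWStep

section Inner

variable {n : ℕ} {lam mu nu : ℕ → ℕ} {f : Flow} {L : Set Tri} {p : List RVertex}

lemma thirdSide_side {t : Turn} (hv : t.valid n) : sideOf (thirdSide t) t.tri := by
  unfold thirdSide
  split
  · exact cwNext_side hv.2.1
  · exact cwNext_side hv.2.2.1

lemma to_acrossInL (C : FlatCtx n f L) {t : Turn}
    (h : ∃ T', sideOf (thirdSide t) T' ∧ T' ≠ t.tri ∧ T' ∈ L) : acrossInL n L t := by
  obtain ⟨T', hs, hne, hmem⟩ := h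
  have hval : T'.valid n := C.memv _ hmem
  rcases sideOf_cases hs with h1 | h1
  · exact Or.inl ⟨h1 ▸ hne, h1 ▸ (⟨hval, hmem⟩ : inL n L T')⟩
  · exact Or.inr ⟨T', h1, hne, hval, hmem⟩

lemma inner_step (C : FlatCtx n f L) {T : Tri} (hm : T ∈ L) (hI : InnerTri n L T)
    {e : EdgeK} (he : sideOf e T) :
    ∃ T', sideOf e T' ∧ T' ≠ T ∧ T' ∈ L ∧ acrossInL n L ⟨T', e, cwNext T' e⟩ := by
  rcases T with ⟨m, i⟩ | ⟨m, i⟩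
  · have sv1 := hI m i (by simp [vertexInTri])
    have sv2 := hI (m+1) i (by simp [vertexInTri])
    have sv3 := hI (m+1) (i+1) (by simp [vertexInTri])
    simp only [sideOf, Tri.sides, List.mem_cons, List.mem_singleton,
      List.not_mem_nil, or_false] at he
    rcases he with rfl | rfl | rfl
    · -- e = dr m i, T' = down m i
      refine ⟨.down m i, by simp [sideOf, Tri.sides], by simp, sv1.2.2.2 _ (by simp [sixAround]), ?_⟩
      simp only [acrossInL, thirdSide, cwNext_dn_dr, cwNext_dn_hz, cwNext_dn_dl, upOf, dnOf?]
      refine Or.inl ⟨by simp, ⟨?_, sv3.2.2.2 _ (by simp [sixAround])⟩⟩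
      have h1 := sv3.1; have h2 := sv3.2.1; have h3 := sv3.2.2.1
      simp [Tri.valid]; omega
    · -- e = hz (m+1) i, T' = down (m+1) i
      refine ⟨.down (m+1) i, by simp [sideOf, Tri.sides], by simp,
        sv2.2.2.2 _ (by simp [sixAround]), ?_⟩
      simp only [acrossInL, thirdSide, cwNext_dn_dr, cwNext_dn_hz, cwNext_dn_dl, upOf, dnOf?]
      refine Or.inl ⟨by simp, ⟨?_, sv2.2.2.2 _ (by simp [sixAround])⟩⟩
      have h1 := sv2.1; have h2 := sv2.2.1; have h3 := sv2.2.2.1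
      simp [Tri.valid]; omega
    · -- e = dl m i, T' = down m (i-1)
      obtain ⟨j, rfl⟩ : ∃ j, i = j + 1 := ⟨i - 1, by have := sv1.1; omega⟩
      obtain ⟨k, rfl⟩ : ∃ k, m = k + 1 := ⟨m - 1, by have := sv1.2.1; omega⟩
      refine ⟨.down (k+1) j, by simp [sideOf, Tri.sides], by simp,
        sv1.2.2.2 _ (by simp [sixAround]), ?_⟩
      simp only [acrossInL, thirdSide, cwNext_dn_dr, cwNext_dn_hz, cwNext_dn_dl, upOf, dnOf?]
      refine Or.inl ⟨by simp, ⟨?_, ?_⟩⟩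
      · have h1 := sv1.1; have h2 := sv1.2.1; have h3 := sv1.2.2.1
        simp [Tri.valid]; omega
      · have := sv1.2.2.2 (Tri.up ((k+1)-1) ((j+1)-1)) (by simp [sixAround])
        simpa using this
  · have sv1 := hI m i (by simp [vertexInTri])
    have sv2 := hI m (i+1) (by simp [vertexInTri])
    have sv3 := hI (m+1) (i+1) (by simp [vertexInTri])
    simp only [sideOf, Tri.sides, List.mem_cons, List.mem_singleton,
      List.not_mem_nil, or_false] at he
    rcases he with rfl | rfl | rfl
    · -- e = hz m i, T' = up (m-1) i
      obtain ⟨k, rfl⟩ : ∃ k, m = k + 1 := ⟨m - 1, by have := sv1.2.1; omega⟩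
      refine ⟨.up k i, by simp [sideOf, Tri.sides], by simp, ?_, ?_⟩
      · have := sv1.2.2.2 (Tri.up ((k+1)-1) i) (by simp [sixAround])
        simpa using this
      · simp only [acrossInL, thirdSide, cwNext_up_dr, cwNext_up_hz, cwNext_up_dl, upOf, dnOf?]
        refine Or.inr ⟨.down k i, by simp, by simp, ?_, sv2.2.2.2 _ (by simp [sixAround])⟩
        have h1 := sv2.1; have h2 := sv2.2.1; have h3 := sv2.2.2.1
        simp [Tri.valid]; omega
    · -- e = dl m (i+1), T' = up m (i+1)
      refine ⟨.up m (i+1), by simp [sideOf, Tri.sides], by simp,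
        sv2.2.2.2 _ (by simp [sixAround]), ?_⟩
      simp only [acrossInL, thirdSide, cwNext_up_dr, cwNext_up_hz, cwNext_up_dl, upOf, dnOf?]
      refine Or.inr ⟨.down (m+1) (i+1), by simp, by simp, ?_,
        sv3.2.2.2 _ (by simp [sixAround])⟩
      have h1 := sv3.1; have h2 := sv3.2.1; have h3 := sv3.2.2.1
      simp [Tri.valid]; omega
    · -- e = dr m i, T' = up m i
      refine ⟨.up m i, by simp [sideOf, Tri.sides], by simp,
        sv1.2.2.2 _ (by simp [sixAround]), ?_⟩
      simp only [acrossInL, thirdSide, cwNext_up_dr, cwNext_up_hz, cwNext_up_dl, upOf, dnOf?]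
      obtain ⟨j, rfl⟩ : ∃ j, i = j + 1 := ⟨i - 1, by have := sv1.1; omega⟩
      refine Or.inr ⟨.down m j, by simp, by simp, ?_, ?_⟩
      · have h1 := sv1.1; have h2 := sv1.2.1; have h3 := sv1.2.2.1
        simp [Tri.valid]; omega
      · have := sv1.2.2.2 (Tri.down m ((j+1)-1)) (by simp [sixAround])
        simpa using this

lemma part2a (C : FlatCtx n f L) (hp : IsCompleteTP (ResidAdj n lam mu nu f) p)
    {t : Turn} (htp : RVertex.turn t ∈ p) (hm : t.tri ∈ L) (hI : InnerTri n L t.tri) :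
    False := by
  obtain ⟨hv, hdel⟩ := tp_facts hp htp
  rcases isCCW_or_isCW hv with hccw | hcw
  · refine hdel (ccw_delTurn C hv hm hccw (to_acrossInL C ?_))
    obtain ⟨T', h1, h2, h3, -⟩ := inner_step C hm hI (thirdSide_side hv)
    exact ⟨T', h1, h2, h3⟩
  · obtain ⟨T', h1, h2, h3, h4⟩ := inner_step C hm hI hv.2.2.1
    exact cw_succ_false C hp htp hcw hm h1 h2 h3 h4

lemma part2b (C : FlatCtx n f L) (hp : IsCompleteTP (ResidAdj n lam mu nu f) p)
    {t : Turn} (htp : RVertex.turn t ∈ p) (hm : t.tri ∈ L) (hccw : IsCCWTurn t)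
    (hacr : acrossInL n L t) : False := by
  obtain ⟨hv, hdel⟩ := tp_facts hp htp
  exact hdel (ccw_delTurn C hv hm hccw hacr)

end Inner

section SameSide

variable {n : ℕ} {f : Flow} {L : Set Tri}

lemma same_side (C : FlatCtx n f L) {e : EdgeK} (h1 : BorderEdge n L e)
    (h2 : BorderEdge n L (lineSucc e)) :
    (inL n L (upOf e) ↔ inL n L (upOf (lineSucc e))) := by
  obtain ⟨hev, hc1⟩ := h1
  obtain ⟨hsv, hc2⟩ := h2
  rcases e with ⟨M, I⟩ | ⟨M, I⟩ | ⟨M, I⟩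
  · -- dl : succ = dl (M+1) I
    simp only [lineSucc] at hsv hc2 ⊢
    simp only [upOf] at hc1 hc2 ⊢
    simp only [EdgeK.valid] at hev hsv
    constructor
    · intro h
      rcases hc2 with h2' | ⟨hdn, hnup⟩
      · exact h2'.1
      · exfalso
        obtain ⟨R, hR, hRin⟩ := hdn
        rcases I with _ | c
        · simp [dnOf?] at hR
        simp only [dnOf?, Option.some.injEq, Nat.add_sub_cancel] at hR
        rw [if_neg (by omega)] at hR
        injection hR with hR
        subst hR
        have hT : Tri.up M (c+1) ∈ L := h.2
        have hTd : Tri.down (M+1) c ∈ L := hRin.2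
        have hTdv := hRin.1
        simp only [Tri.valid] at hTdv
        have hg := C.geq _ hT _ hTd
        simp only [gfun, Prod.mk.injEq] at hg
        obtain ⟨a1, a2, a3⟩ := hg
        have v1 : (Rhombus.drD (M+1) (c+1)).valid n := by simp [Rhombus.valid]; omega
        have v2 : (Rhombus.dlD (M+1) c).valid n := by simp [Rhombus.valid]; omega
        have s1 := C.hive _ v1
        have s2 := C.hive _ v2
        have key : slack f (Rhombus.dlD (M+1) c) = 0 := by
          simp only [slack] at s1 s2 ⊢; linarith
        have hmem := C.memU v2 key hTd
        exact hnup ⟨by simp [Tri.valid]; omega, hmem⟩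
    · intro h
      rcases hc1 with h1' | ⟨hdn, hnup⟩
      · exact h1'.1
      · exfalso
        obtain ⟨R, hR, hRin⟩ := hdn
        rcases I with _ | b
        · simp [dnOf?] at hR
        simp only [dnOf?, Option.some.injEq, Nat.add_sub_cancel] at hR
        rw [if_neg (by omega)] at hR
        injection hR with hR
        subst hR
        have hT1 : Tri.down M b ∈ L := hRin.2
        have hT2 : Tri.up (M+1) (b+1) ∈ L := h.2
        have hT1v := hRin.1
        simp only [Tri.valid] at hT1v
        have hT2v := h.1
        simp only [Tri.valid] at hT2v
        have hg := C.geq _ hT1 _ hT2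
        simp only [gfun, Prod.mk.injEq] at hg
        obtain ⟨a1, a2, a3⟩ := hg
        have l1 := C.flow.1 (M+1) (b+1) (by omega) (by omega)
        have l2 := C.flow.2 (M+1) (b+1) (by omega) (by omega)
        have v1 : (Rhombus.dlD M b).valid n := by simp [Rhombus.valid]; omega
        have v2 : (Rhombus.hzD M (b+1)).valid n := by simp [Rhombus.valid]; omega
        have s1 := C.hive _ v1
        have s2 := C.hive _ v2
        have key : slack f (Rhombus.dlD M b) = 0 := by
          simp only [slack] at s1 s2 ⊢; linarith
        have hmem := C.memU v1 key hT1
        exact hnup ⟨by simp [Tri.valid]; omega, hmem⟩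
  · -- dr : succ = dr (M+1) (I+1)
    simp only [lineSucc] at hsv hc2 ⊢
    simp only [upOf] at hc1 hc2 ⊢
    simp only [EdgeK.valid] at hev hsv
    constructor
    · intro h
      rcases hc2 with h2' | ⟨hdn, hnup⟩
      · exact h2'.1
      · exfalso
        obtain ⟨R, hR, hRin⟩ := hdn
        simp only [dnOf?, Option.some.injEq] at hR
        subst hR
        have hT : Tri.up M I ∈ L := h.2
        have hTd : Tri.down (M+1) (I+1) ∈ L := hRin.2
        have hTdv := hRin.1
        simp only [Tri.valid] at hTdv
        have hg := C.geq _ hT _ hTd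
        simp only [gfun, Prod.mk.injEq] at hg
        obtain ⟨a1, a2, a3⟩ := hg
        have v1 : (Rhombus.drD (M+1) (I+1)).valid n := by simp [Rhombus.valid]; omega
        have v2 : (Rhombus.dlD (M+1) I).valid n := by simp [Rhombus.valid]; omega
        have s1 := C.hive _ v1
        have s2 := C.hive _ v2
        have key : slack f (Rhombus.drD (M+1) (I+1)) = 0 := by
          simp only [slack] at s1 s2 ⊢; linarith
        have hmem := C.memU v1 key hTd
        exact hnup ⟨by simp [Tri.valid]; omega, hmem⟩
    · intro h
      rcases hc1 with h1' | ⟨hdn, hnup⟩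
      · exact h1'.1
      · exfalso
        obtain ⟨R, hR, hRin⟩ := hdn
        simp only [dnOf?, Option.some.injEq] at hR
        subst hR
        have hT1 : Tri.down M I ∈ L := hRin.2
        have hT2 : Tri.up (M+1) (I+1) ∈ L := h.2
        have hT1v := hRin.1
        simp only [Tri.valid] at hT1v
        have hT2v := h.1
        simp only [Tri.valid] at hT2v
        have hg := C.geq _ hT1 _ hT2
        simp only [gfun, Prod.mk.injEq] at hg
        obtain ⟨a1, a2, a3⟩ := hg
        have l1 := C.flow.2 (M+1) (I+1) (by omega) (by omega)
        have l2 := C.flow.1 (M+1) (I+1) (by omega) (by omega)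
        have v1 : (Rhombus.hzD M (I+1)).valid n := by simp [Rhombus.valid]; omega
        have v2 : (Rhombus.drD (M+1) (I+1)).valid n := by simp [Rhombus.valid]; omega
        have s1 := C.hive _ v1
        have s2 := C.hive _ v2
        have key : slack f (Rhombus.drD (M+1) (I+1)) = 0 := by
          simp only [slack] at s1 s2 ⊢; linarith
        have hmem := C.memD v2 key hT2
        rcases hc2 with h2' | ⟨hdn2, hnup2⟩
        · exact h2'.2 ⟨Tri.down (M+1) (I+1), by simp [dnOf?], by simp [Tri.valid]; omega, hmem⟩
        · exact hnup2 h
  · -- hz : succ = hz M (I+1)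
    simp only [lineSucc] at hsv hc2 ⊢
    simp only [EdgeK.valid] at hev hsv
    obtain ⟨a, rfl⟩ : ∃ a, M = a + 1 := ⟨M - 1, by omega⟩
    simp only [upOf, Nat.add_sub_cancel] at hc1 hc2 ⊢
    constructor
    · intro h
      rcases hc2 with h2' | ⟨hdn, hnup⟩
      · exact h2'.1
      · exfalso
        obtain ⟨R, hR, hRin⟩ := hdn
        simp only [dnOf?, Option.some.injEq] at hR
        subst hR
        have hT : Tri.up a I ∈ L := h.2
        have hTv := h.1
        simp only [Tri.valid] at hTv
        have hTd : Tri.down (a+1) (I+1) ∈ L := hRin.2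
        have hTdv := hRin.1
        simp only [Tri.valid] at hTdv
        have hg := C.geq _ hT _ hTd
        simp only [gfun, Prod.mk.injEq] at hg
        obtain ⟨a1, a2, a3⟩ := hg
        have l1 := C.flow.2 a I (by omega) (by omega)
        have l2 := C.flow.1 a I (by omega) (by omega)
        have v1 : (Rhombus.hzD a (I+1)).valid n := by simp [Rhombus.valid]; omega
        have v2 : (Rhombus.dlD a I).valid n := by simp [Rhombus.valid]; omega
        have s1 := C.hive _ v1
        have s2 := C.hive _ v2
        have key : slack f (Rhombus.hzD a (I+1)) = 0 := by
          simp only [slack] at s1 s2 ⊢; linarith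
        have hmem := C.memU v1 key hTd
        exact hnup ⟨by simp [Tri.valid]; omega, hmem⟩
    · intro h
      rcases hc1 with h1' | ⟨hdn, hnup⟩
      · exact h1'.1
      · exfalso
        obtain ⟨R, hR, hRin⟩ := hdn
        simp only [dnOf?, Option.some.injEq] at hR
        subst hR
        have hT1 : Tri.down (a+1) I ∈ L := hRin.2
        have hT1v := hRin.1
        simp only [Tri.valid] at hT1v
        have hT2 : Tri.up a (I+1) ∈ L := h.2
        have hT2v := h.1
        simp only [Tri.valid] at hT2v
        have hg := C.geq _ hT1 _ hT2
        simp only [gfun, Prod.mk.injEq] at hg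
        obtain ⟨a1, a2, a3⟩ := hg
        have l1 := C.flow.2 (a+1) (I+1) (by omega) (by omega)
        have l2 := C.flow.1 (a+1) (I+1) (by omega) (by omega)
        have v1 : (Rhombus.hzD a (I+1)).valid n := by simp [Rhombus.valid]; omega
        have v2 : (Rhombus.drD (a+1) (I+1)).valid n := by simp [Rhombus.valid]; omega
        have s1 := C.hive _ v1
        have s2 := C.hive _ v2
        have key : slack f (Rhombus.hzD a (I+1)) = 0 := by
          simp only [slack] at s1 s2 ⊢; linarith
        have hmem := C.memD v1 key hT2
        rcases hc2 with h2' | ⟨hdn2, hnup2⟩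
        · exact h2'.2 ⟨Tri.down (a+1) (I+1), by simp [dnOf?], by simp [Tri.valid]; omega, hmem⟩
        · exact hnup2 h

end SameSide

section Finish

variable {n : ℕ} {lam mu nu : ℕ → ℕ} {f : Flow} {L : Set Tri} {p : List RVertex}

lemma cwNext_cwNext_ne {T : Tri} {e : EdgeK} (he : sideOf e T) :
    cwNext T (cwNext T e) ≠ e := by
  rcases T with ⟨m, i⟩ | ⟨m, i⟩ <;> simp [sideOf, Tri.sides] at he <;>
    rcases he with rfl | rfl | rfl <;> simp

lemma finish_enter (C : FlatCtx n f L) (hp : IsCompleteTP (ResidAdj n lam mu nu f) p)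
    {t : Turn} (htp : RVertex.turn t ∈ p) (hm : t.tri ∈ L)
    {T' : Tri} (hs : sideOf (cwNext t.tri (cwNext t.tri t.inE)) T') (hne : T' ≠ t.tri)
    (hmem : T' ∈ L)
    (hacr : acrossInL n L ⟨T', cwNext t.tri (cwNext t.tri t.inE),
      cwNext T' (cwNext t.tri (cwNext t.tri t.inE))⟩) : False := by
  obtain ⟨hv, hdel⟩ := tp_facts hp htp
  rcases isCCW_or_isCW hv with hccw | hcw
  · have h3 : thirdSide t = cwNext t.tri (cwNext t.tri t.inE) := by
      unfold thirdSide
      rw [hccw, if_neg (cwNext_cwNext_ne hv.2.1)]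
    exact hdel (ccw_delTurn C hv hm hccw
      (to_acrossInL C ⟨T', by rw [h3]; exact hs, hne, hmem⟩))
  · have hout : t.outE = cwNext t.tri (cwNext t.tri t.inE) := by
      rw [hcw]
      exact (cwNext3 hv.2.2.1).symm
    exact cw_succ_false C hp htp hcw hm (by rw [← hout] at hs; exact hs) hne hmem
      (by rw [← hout] at hacr; exact hacr)

lemma finish_exit (C : FlatCtx n f L) (hp : IsCompleteTP (ResidAdj n lam mu nu f) p)
    {t : Turn} (htp : RVertex.turn t ∈ p) (hm : t.tri ∈ L)
    {T₀ : Tri} (hs : sideOf (cwNext t.tri t.outE) T₀) (hne : T₀ ≠ t.tri)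
    (hmem : T₀ ∈ L)
    (hacr : acrossInL n L ⟨T₀, cwNext T₀ (cwNext T₀ (cwNext t.tri t.outE)),
      cwNext t.tri t.outE⟩) : False := by
  obtain ⟨hv, hdel⟩ := tp_facts hp htp
  rcases isCCW_or_isCW hv with hccw | hcw
  · have h3 : thirdSide t = cwNext t.tri t.outE := by
      unfold thirdSide
      rw [if_neg]
      rw [hccw]
      exact cwNext_cwNext_ne hv.2.1
    exact hdel (ccw_delTurn C hv hm hccw
      (to_acrossInL C ⟨T₀, by rw [h3]; exact hs, hne, hmem⟩))
  · exact cw_pred_false C hp htp hcw hm (by rw [← hcw] at hs; exact hs) hne hmem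
      (by rw [← hcw] at hacr; exact hacr)

end Finish

section EnterConfigs

variable {n : ℕ} {lam mu nu : ℕ → ℕ} {f : Flow} {L : Set Tri} {p : List RVertex}

lemma enter_dr_up (C : FlatCtx n f L) (hp : IsCompleteTP (ResidAdj n lam mu nu f) p)
    {t : Turn} (htp : RVertex.turn t ∈ p) (hm : t.tri ∈ L) {a b : ℕ}
    (htri : t.tri = .up (a+1) (b+1)) (hin : t.inE = .dr (a+1) (b+1))
    (hbe : BorderEdge n L (.dr (a+1) (b+1))) (hb : BorderEdge n L (.dr a b)) : False := by
  have hup : Tri.up (a+1) (b+1) ∈ L := htri ▸ hm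
  have hupv := C.memv _ hup
  have hss := same_side C hb hbe
  simp only [lineSucc, upOf] at hss
  have hup2 : Tri.up a b ∈ L := (hss.mpr ⟨hupv, hup⟩).2
  have h2v := C.memv _ hup2
  simp only [Tri.valid] at hupv h2v
  have hg := C.geq _ hup _ hup2
  simp only [gfun, Prod.mk.injEq] at hg
  have v1 : (Rhombus.hzD a b).valid n := by simp [Rhombus.valid]; omega
  have key : slack f (Rhombus.hzD a b) = 0 := by simp only [slack]; linarith [hg.1]
  have hdn : Tri.down (a+1) b ∈ L := C.memD v1 key hup2
  have hd : cwNext t.tri (cwNext t.tri t.inE) = .dl (a+1) (b+1) := by rw [htri, hin]; simp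
  refine finish_enter C hp htp hm (T' := .down (a+1) b)
    (by rw [hd]; simp [sideOf, Tri.sides]) (by rw [htri]; simp) hdn ?_
  rw [hd]
  exact to_acrossInL C ⟨.up a b, by simp [thirdSide, sideOf, Tri.sides], by simp, hup2⟩

lemma enter_dr_dn (C : FlatCtx n f L) (hp : IsCompleteTP (ResidAdj n lam mu nu f) p)
    {t : Turn} (htp : RVertex.turn t ∈ p) (hm : t.tri ∈ L) {M I : ℕ}
    (htri : t.tri = .down M I) (hin : t.inE = .dr M I)
    (hbe : BorderEdge n L (.dr M I)) (hb : BorderEdge n L (.dr (M+1) (I+1))) : False := by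
  have hdn : Tri.down M I ∈ L := htri ▸ hm
  have hdnv := C.memv _ hdn
  simp only [Tri.valid] at hdnv
  have hnup : ¬ inL n L (Tri.up M I) := by
    rcases hbe.2 with ⟨-, hnd⟩ | ⟨-, hnup⟩
    · exact absurd ⟨Tri.down M I, rfl, ⟨by simp [Tri.valid]; omega, hdn⟩⟩ hnd
    · simpa [upOf] using hnup
  have hss := same_side C hbe hb
  simp only [lineSucc, upOf] at hss
  have hnup2 : ¬ inL n L (Tri.up (M+1) (I+1)) := fun hc => hnup (hss.mpr hc)
  have hR : Tri.down (M+1) (I+1) ∈ L := by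
    rcases hb.2 with ⟨hupL, -⟩ | ⟨⟨R, hReq, hRin⟩, -⟩
    · exact absurd (by simpa [upOf] using hupL) hnup2
    · simp only [dnOf?, Option.some.injEq] at hReq
      subst hReq
      exact hRin.2
  have hg := C.geq _ hdn _ hR
  simp only [gfun, Prod.mk.injEq] at hg
  have v1 : (Rhombus.dlD M I).valid n := by simp [Rhombus.valid]; omega
  have key : slack f (Rhombus.dlD M I) = 0 := by simp only [slack]; linarith [hg.2.2]
  have hupMI1 : Tri.up M (I+1) ∈ L := C.memU v1 key hdn
  have hd : cwNext t.tri (cwNext t.tri t.inE) = .dl M (I+1) := by rw [htri, hin]; simp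
  refine finish_enter C hp htp hm (T' := .up M (I+1))
    (by rw [hd]; simp [sideOf, Tri.sides]) (by rw [htri]; simp) hupMI1 ?_
  rw [hd]
  exact to_acrossInL C ⟨.down (M+1) (I+1), by simp [thirdSide, sideOf, Tri.sides], by simp, hR⟩

lemma enter_dl_dn (C : FlatCtx n f L) (hp : IsCompleteTP (ResidAdj n lam mu nu f) p)
    {t : Turn} (htp : RVertex.turn t ∈ p) (hm : t.tri ∈ L) {a b : ℕ}
    (htri : t.tri = .down (a+1) b) (hin : t.inE = .dl (a+1) (b+1))
    (hbe : BorderEdge n L (.dl (a+1) (b+1))) (hb : BorderEdge n L (.dl a (b+1))) : False := by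
  have hdn : Tri.down (a+1) b ∈ L := htri ▸ hm
  have hdnv := C.memv _ hdn
  simp only [Tri.valid] at hdnv
  have hnup : ¬ inL n L (Tri.up (a+1) (b+1)) := by
    rcases hbe.2 with ⟨-, hnd⟩ | ⟨-, hnup⟩
    · refine absurd ⟨Tri.down (a+1) b, ?_, ⟨by simp [Tri.valid]; omega, hdn⟩⟩ hnd
      simp [dnOf?]
    · simpa [upOf] using hnup
  have hss := same_side C hb hbe
  simp only [lineSucc, upOf] at hss
  have hnup1 : ¬ inL n L (Tri.up a (b+1)) := fun hc => hnup (hss.mp hc)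
  have hTop : Tri.down a b ∈ L := by
    rcases hb.2 with ⟨hupL, -⟩ | ⟨⟨R, hReq, hRin⟩, -⟩
    · exact absurd (by simpa [upOf] using hupL) hnup1
    · simp only [dnOf?, Option.some.injEq, Nat.add_sub_cancel] at hReq
      rw [if_neg (by omega)] at hReq
      injection hReq with hReq
      subst hReq
      exact hRin.2
  have hTopv := C.memv _ hTop
  simp only [Tri.valid] at hTopv
  have hg := C.geq _ hdn _ hTop
  simp only [gfun, Prod.mk.injEq] at hg
  have v1 : (Rhombus.drD a b).valid n := by simp [Rhombus.valid]; omega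
  have key : slack f (Rhombus.drD a b) = 0 := by simp only [slack]; linarith [hg.2.2]
  have hupab : Tri.up a b ∈ L := C.memU v1 key hTop
  have hd : cwNext t.tri (cwNext t.tri t.inE) = .hz (a+1) b := by rw [htri, hin]; simp
  refine finish_enter C hp htp hm (T' := .up a b)
    (by rw [hd]; simp [sideOf, Tri.sides]) (by rw [htri]; simp) hupab ?_
  rw [hd]
  exact to_acrossInL C ⟨.down a b, by simp [thirdSide, sideOf, Tri.sides], by simp, hTop⟩

lemma enter_dl_up (C : FlatCtx n f L) (hp : IsCompleteTP (ResidAdj n lam mu nu f) p)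
    {t : Turn} (htp : RVertex.turn t ∈ p) (hm : t.tri ∈ L) {M I : ℕ}
    (htri : t.tri = .up M I) (hin : t.inE = .dl M I)
    (hbe : BorderEdge n L (.dl M I)) (hb : BorderEdge n L (.dl (M+1) I)) : False := by
  have hup : Tri.up M I ∈ L := htri ▸ hm
  have hupv := C.memv _ hup
  have hss := same_side C hbe hb
  simp only [lineSucc, upOf] at hss
  have hup2 : Tri.up (M+1) I ∈ L := (hss.mp ⟨hupv, hup⟩).2
  have h2v := C.memv _ hup2
  simp only [Tri.valid] at hupv h2v
  have hg := C.geq _ hup _ hup2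
  simp only [gfun, Prod.mk.injEq] at hg
  have v1 : (Rhombus.drD (M+1) I).valid n := by simp [Rhombus.valid]; omega
  have key : slack f (Rhombus.drD (M+1) I) = 0 := by simp only [slack]; linarith [hg.2.2]
  have hdnM1 : Tri.down (M+1) I ∈ L := C.memD v1 key hup2
  have hd : cwNext t.tri (cwNext t.tri t.inE) = .hz (M+1) I := by rw [htri, hin]; simp
  refine finish_enter C hp htp hm (T' := .down (M+1) I)
    (by rw [hd]; simp [sideOf, Tri.sides]) (by rw [htri]; simp) hdnM1 ?_
  rw [hd]
  exact to_acrossInL C ⟨.up (M+1) I, by simp [thirdSide, sideOf, Tri.sides], by simp, hup2⟩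

lemma enter_hz_dn (C : FlatCtx n f L) (hp : IsCompleteTP (ResidAdj n lam mu nu f) p)
    {t : Turn} (htp : RVertex.turn t ∈ p) (hm : t.tri ∈ L) {a c : ℕ}
    (htri : t.tri = .down (a+1) (c+1)) (hin : t.inE = .hz (a+1) (c+1))
    (hbe : BorderEdge n L (.hz (a+1) (c+1))) (hb : BorderEdge n L (.hz (a+1) c)) : False := by
  have hdn : Tri.down (a+1) (c+1) ∈ L := htri ▸ hm
  have hdnv := C.memv _ hdn
  simp only [Tri.valid] at hdnv
  have hnup : ¬ inL n L (Tri.up a (c+1)) := by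
    rcases hbe.2 with ⟨-, hnd⟩ | ⟨-, hnup⟩
    · exact absurd ⟨Tri.down (a+1) (c+1), rfl, ⟨by simp [Tri.valid]; omega, hdn⟩⟩ hnd
    · simpa [upOf] using hnup
  have hss := same_side C hb hbe
  simp only [lineSucc, upOf, Nat.add_sub_cancel] at hss
  have hnupc : ¬ inL n L (Tri.up a c) := fun hc => hnup (hss.mp hc)
  have hll : Tri.down (a+1) c ∈ L := by
    rcases hb.2 with ⟨hupL, -⟩ | ⟨⟨R, hReq, hRin⟩, -⟩
    · exact absurd (by simpa [upOf] using hupL) hnupc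
    · simp only [dnOf?, Option.some.injEq] at hReq
      subst hReq
      exact hRin.2
  have hllv := C.memv _ hll
  simp only [Tri.valid] at hllv
  have hg := C.geq _ hdn _ hll
  simp only [gfun, Prod.mk.injEq] at hg
  have v1 : (Rhombus.drD (a+1) (c+1)).valid n := by simp [Rhombus.valid]; omega
  have v2 : (Rhombus.dlD (a+1) c).valid n := by simp [Rhombus.valid]; omega
  have s1 := C.hive _ v1
  have s2 := C.hive _ v2
  have key : slack f (Rhombus.drD (a+1) (c+1)) = 0 := by
    simp only [slack] at s1 s2 ⊢; linarith [hg.2.2]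
  have hupM : Tri.up (a+1) (c+1) ∈ L := C.memU v1 key hdn
  have hd : cwNext t.tri (cwNext t.tri t.inE) = .dr (a+1) (c+1) := by rw [htri, hin]; simp
  refine finish_enter C hp htp hm (T' := .up (a+1) (c+1))
    (by rw [hd]; simp [sideOf, Tri.sides]) (by rw [htri]; simp) hupM ?_
  rw [hd]
  exact to_acrossInL C ⟨.down (a+1) c, by simp [thirdSide, sideOf, Tri.sides], by simp, hll⟩

lemma enter_hz_up (C : FlatCtx n f L) (hp : IsCompleteTP (ResidAdj n lam mu nu f) p)
    {t : Turn} (htp : RVertex.turn t ∈ p) (hm : t.tri ∈ L) {a I : ℕ}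
    (htri : t.tri = .up a I) (hin : t.inE = .hz (a+1) I)
    (hbe : BorderEdge n L (.hz (a+1) I)) (hb : BorderEdge n L (.hz (a+1) (I+1))) : False := by
  have hup : Tri.up a I ∈ L := htri ▸ hm
  have hupv := C.memv _ hup
  have hss := same_side C hbe hb
  simp only [lineSucc, upOf, Nat.add_sub_cancel] at hss
  have hup2 : Tri.up a (I+1) ∈ L := (hss.mp ⟨hupv, hup⟩).2
  have h2v := C.memv _ hup2
  simp only [Tri.valid] at hupv h2v
  have hg := C.geq _ hup _ hup2
  simp only [gfun, Prod.mk.injEq] at hg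
  have v1 : (Rhombus.drD a I).valid n := by simp [Rhombus.valid]; omega
  have v2 : (Rhombus.dlD a I).valid n := by simp [Rhombus.valid]; omega
  have s1 := C.hive _ v1
  have s2 := C.hive _ v2
  have key : slack f (Rhombus.drD a I) = 0 := by
    simp only [slack] at s1 s2 ⊢; linarith [hg.2.2]
  have hdnaI : Tri.down a I ∈ L := C.memD v1 key hup
  have hd : cwNext t.tri (cwNext t.tri t.inE) = .dr a I := by rw [htri, hin]; simp
  refine finish_enter C hp htp hm (T' := .down a I)
    (by rw [hd]; simp [sideOf, Tri.sides]) (by rw [htri]; simp) hdnaI ?_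
  rw [hd]
  exact to_acrossInL C ⟨.up a (I+1), by simp [thirdSide, sideOf, Tri.sides], by simp, hup2⟩

end EnterConfigs

section ExitConfigs

variable {n : ℕ} {lam mu nu : ℕ → ℕ} {f : Flow} {L : Set Tri} {p : List RVertex}

lemma exit_dr_up (C : FlatCtx n f L) (hp : IsCompleteTP (ResidAdj n lam mu nu f) p)
    {t : Turn} (htp : RVertex.turn t ∈ p) (hm : t.tri ∈ L) {M I : ℕ}
    (htri : t.tri = .up M I) (hout : t.outE = .dr M I)
    (hbe : BorderEdge n L (.dr M I)) (hb : BorderEdge n L (.dr (M+1) (I+1))) : False := by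
  have hup : Tri.up M I ∈ L := htri ▸ hm
  have hupv := C.memv _ hup
  have hss := same_side C hbe hb
  simp only [lineSucc, upOf] at hss
  have hup2 : Tri.up (M+1) (I+1) ∈ L := (hss.mp ⟨hupv, hup⟩).2
  have h2v := C.memv _ hup2
  simp only [Tri.valid] at hupv h2v
  have hg := C.geq _ hup _ hup2
  simp only [gfun, Prod.mk.injEq] at hg
  have v1 : (Rhombus.hzD M I).valid n := by simp [Rhombus.valid]; omega
  have key : slack f (Rhombus.hzD M I) = 0 := by simp only [slack]; linarith [hg.1]
  have hdn : Tri.down (M+1) I ∈ L := C.memD v1 key hup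
  have hd : cwNext t.tri t.outE = .hz (M+1) I := by rw [htri, hout]; simp
  refine finish_exit C hp htp hm (T₀ := .down (M+1) I)
    (by rw [hd]; simp [sideOf, Tri.sides]) (by rw [htri]; simp) hdn ?_
  rw [hd]
  exact to_acrossInL C ⟨.up (M+1) (I+1), by simp [thirdSide, sideOf, Tri.sides], by simp, hup2⟩

lemma exit_dr_dn (C : FlatCtx n f L) (hp : IsCompleteTP (ResidAdj n lam mu nu f) p)
    {t : Turn} (htp : RVertex.turn t ∈ p) (hm : t.tri ∈ L) {a b : ℕ}
    (htri : t.tri = .down (a+1) (b+1)) (hout : t.outE = .dr (a+1) (b+1))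
    (hbe : BorderEdge n L (.dr (a+1) (b+1))) (hb : BorderEdge n L (.dr a b)) : False := by
  have hdn : Tri.down (a+1) (b+1) ∈ L := htri ▸ hm
  have hdnv := C.memv _ hdn
  simp only [Tri.valid] at hdnv
  have hnup : ¬ inL n L (Tri.up (a+1) (b+1)) := by
    rcases hbe.2 with ⟨-, hnd⟩ | ⟨-, hnup⟩
    · exact absurd ⟨Tri.down (a+1) (b+1), rfl, ⟨by simp [Tri.valid]; omega, hdn⟩⟩ hnd
    · simpa [upOf] using hnup
  have hss := same_side C hb hbe
  simp only [lineSucc, upOf] at hss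
  have hnup2 : ¬ inL n L (Tri.up a b) := fun hc => hnup (hss.mp hc)
  have hTop : Tri.down a b ∈ L := by
    rcases hb.2 with ⟨hupL, -⟩ | ⟨⟨R, hReq, hRin⟩, -⟩
    · exact absurd (by simpa [upOf] using hupL) hnup2
    · simp only [dnOf?, Option.some.injEq] at hReq
      subst hReq
      exact hRin.2
  have hTopv := C.memv _ hTop
  simp only [Tri.valid] at hTopv
  have hg := C.geq _ hdn _ hTop
  simp only [gfun, Prod.mk.injEq] at hg
  have v1 : (Rhombus.hzD a (b+1)).valid n := by simp [Rhombus.valid]; omega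
  have key : slack f (Rhombus.hzD a (b+1)) = 0 := by simp only [slack]; linarith [hg.1]
  have hupT : Tri.up a (b+1) ∈ L := C.memU v1 key hdn
  have hd : cwNext t.tri t.outE = .hz (a+1) (b+1) := by rw [htri, hout]; simp
  refine finish_exit C hp htp hm (T₀ := .up a (b+1))
    (by rw [hd]; simp [sideOf, Tri.sides]) (by rw [htri]; simp) hupT ?_
  rw [hd]
  exact to_acrossInL C ⟨.down a b, by simp [thirdSide, sideOf, Tri.sides], by simp, hTop⟩

lemma exit_dl_dn (C : FlatCtx n f L) (hp : IsCompleteTP (ResidAdj n lam mu nu f) p)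
    {t : Turn} (htp : RVertex.turn t ∈ p) (hm : t.tri ∈ L) {M b : ℕ}
    (htri : t.tri = .down M b) (hout : t.outE = .dl M (b+1))
    (hbe : BorderEdge n L (.dl M (b+1))) (hb : BorderEdge n L (.dl (M+1) (b+1))) : False := by
  have hdn : Tri.down M b ∈ L := htri ▸ hm
  have hdnv := C.memv _ hdn
  simp only [Tri.valid] at hdnv
  have hnup : ¬ inL n L (Tri.up M (b+1)) := by
    rcases hbe.2 with ⟨-, hnd⟩ | ⟨-, hnup⟩
    · refine absurd ⟨Tri.down M b, ?_, ⟨by simp [Tri.valid]; omega, hdn⟩⟩ hnd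
      simp [dnOf?]
    · simpa [upOf] using hnup
  have hss := same_side C hbe hb
  simp only [lineSucc, upOf] at hss
  have hnup2 : ¬ inL n L (Tri.up (M+1) (b+1)) := fun hc => hnup (hss.mpr hc)
  have hll : Tri.down (M+1) b ∈ L := by
    rcases hb.2 with ⟨hupL, -⟩ | ⟨⟨R, hReq, hRin⟩, -⟩
    · exact absurd (by simpa [upOf] using hupL) hnup2
    · simp only [dnOf?, Option.some.injEq, Nat.add_sub_cancel] at hReq
      rw [if_neg (by omega)] at hReq
      injection hReq with hReq
      subst hReq
      exact hRin.2
  have hg := C.geq _ hdn _ hll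
  simp only [gfun, Prod.mk.injEq] at hg
  have v1 : (Rhombus.drD M b).valid n := by simp [Rhombus.valid]; omega
  have key : slack f (Rhombus.drD M b) = 0 := by simp only [slack]; linarith [hg.2.2]
  have hupMb : Tri.up M b ∈ L := C.memU v1 key hdn
  have hd : cwNext t.tri t.outE = .dr M b := by rw [htri, hout]; simp
  refine finish_exit C hp htp hm (T₀ := .up M b)
    (by rw [hd]; simp [sideOf, Tri.sides]) (by rw [htri]; simp) hupMb ?_
  rw [hd]
  exact to_acrossInL C ⟨.down (M+1) b, by simp [thirdSide, sideOf, Tri.sides], by simp, hll⟩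

lemma exit_dl_up (C : FlatCtx n f L) (hp : IsCompleteTP (ResidAdj n lam mu nu f) p)
    {t : Turn} (htp : RVertex.turn t ∈ p) (hm : t.tri ∈ L) {a I : ℕ}
    (htri : t.tri = .up (a+1) I) (hout : t.outE = .dl (a+1) I)
    (hbe : BorderEdge n L (.dl (a+1) I)) (hb : BorderEdge n L (.dl a I)) : False := by
  have hup : Tri.up (a+1) I ∈ L := htri ▸ hm
  have hupv := C.memv _ hup
  have hss := same_side C hb hbe
  simp only [lineSucc, upOf] at hss
  have hup2 : Tri.up a I ∈ L := (hss.mpr ⟨hupv, hup⟩).2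
  have h2v := C.memv _ hup2
  simp only [Tri.valid] at hupv h2v
  have hg := C.geq _ hup _ hup2
  simp only [gfun, Prod.mk.injEq] at hg
  have v1 : (Rhombus.drD (a+1) I).valid n := by simp [Rhombus.valid]; omega
  have key : slack f (Rhombus.drD (a+1) I) = 0 := by simp only [slack]; linarith [hg.2.2]
  have hdnM : Tri.down (a+1) I ∈ L := C.memD v1 key hup
  have hd : cwNext t.tri t.outE = .dr (a+1) I := by rw [htri, hout]; simp
  refine finish_exit C hp htp hm (T₀ := .down (a+1) I)
    (by rw [hd]; simp [sideOf, Tri.sides]) (by rw [htri]; simp) hdnM ?_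
  rw [hd]
  exact to_acrossInL C ⟨.up a I, by simp [thirdSide, sideOf, Tri.sides], by simp, hup2⟩

lemma exit_hz_dn (C : FlatCtx n f L) (hp : IsCompleteTP (ResidAdj n lam mu nu f) p)
    {t : Turn} (htp : RVertex.turn t ∈ p) (hm : t.tri ∈ L) {a I : ℕ}
    (htri : t.tri = .down (a+1) I) (hout : t.outE = .hz (a+1) I)
    (hbe : BorderEdge n L (.hz (a+1) I)) (hb : BorderEdge n L (.hz (a+1) (I+1))) : False := by
  have hdn : Tri.down (a+1) I ∈ L := htri ▸ hm
  have hdnv := C.memv _ hdn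
  simp only [Tri.valid] at hdnv
  have hnup : ¬ inL n L (Tri.up a I) := by
    rcases hbe.2 with ⟨-, hnd⟩ | ⟨-, hnup⟩
    · exact absurd ⟨Tri.down (a+1) I, rfl, ⟨by simp [Tri.valid]; omega, hdn⟩⟩ hnd
    · simpa [upOf] using hnup
  have hss := same_side C hbe hb
  simp only [lineSucc, upOf, Nat.add_sub_cancel] at hss
  have hnup2 : ¬ inL n L (Tri.up a (I+1)) := fun hc => hnup (hss.mpr hc)
  have hr : Tri.down (a+1) (I+1) ∈ L := by
    rcases hb.2 with ⟨hupL, -⟩ | ⟨⟨R, hReq, hRin⟩, -⟩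
    · exact absurd (by simpa [upOf] using hupL) hnup2
    · simp only [dnOf?, Option.some.injEq] at hReq
      subst hReq
      exact hRin.2
  have hrv := C.memv _ hr
  simp only [Tri.valid] at hrv
  have hg := C.geq _ hdn _ hr
  simp only [gfun, Prod.mk.injEq] at hg
  have v1 : (Rhombus.dlD (a+1) I).valid n := by simp [Rhombus.valid]; omega
  have v2 : (Rhombus.drD (a+1) (I+1)).valid n := by simp [Rhombus.valid]; omega
  have s1 := C.hive _ v1
  have s2 := C.hive _ v2
  have key : slack f (Rhombus.dlD (a+1) I) = 0 := by
    simp only [slack] at s1 s2 ⊢; linarith [hg.2.2]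
  have hupT : Tri.up (a+1) (I+1) ∈ L := C.memU v1 key hdn
  have hd : cwNext t.tri t.outE = .dl (a+1) (I+1) := by rw [htri, hout]; simp
  refine finish_exit C hp htp hm (T₀ := .up (a+1) (I+1))
    (by rw [hd]; simp [sideOf, Tri.sides]) (by rw [htri]; simp) hupT ?_
  rw [hd]
  exact to_acrossInL C ⟨.down (a+1) (I+1), by simp [thirdSide, sideOf, Tri.sides], by simp, hr⟩

lemma exit_hz_up (C : FlatCtx n f L) (hp : IsCompleteTP (ResidAdj n lam mu nu f) p)
    {t : Turn} (htp : RVertex.turn t ∈ p) (hm : t.tri ∈ L) {a c : ℕ}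
    (htri : t.tri = .up a (c+1)) (hout : t.outE = .hz (a+1) (c+1))
    (hbe : BorderEdge n L (.hz (a+1) (c+1))) (hb : BorderEdge n L (.hz (a+1) c)) : False := by
  have hup : Tri.up a (c+1) ∈ L := htri ▸ hm
  have hupv := C.memv _ hup
  have hss := same_side C hb hbe
  simp only [lineSucc, upOf, Nat.add_sub_cancel] at hss
  have hup2 : Tri.up a c ∈ L := (hss.mpr ⟨hupv, hup⟩).2
  have h2v := C.memv _ hup2
  simp only [Tri.valid] at hupv h2v
  have hg := C.geq _ hup _ hup2
  simp only [gfun, Prod.mk.injEq] at hg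
  have v1 : (Rhombus.dlD a c).valid n := by simp [Rhombus.valid]; omega
  have v2 : (Rhombus.drD a c).valid n := by simp [Rhombus.valid]; omega
  have s1 := C.hive _ v1
  have s2 := C.hive _ v2
  have key : slack f (Rhombus.dlD a c) = 0 := by
    simp only [slack] at s1 s2 ⊢; linarith [hg.2.2]
  have hdnac : Tri.down a c ∈ L := C.memD v1 key hup
  have hd : cwNext t.tri t.outE = .dl a (c+1) := by rw [htri, hout]; simp
  refine finish_exit C hp htp hm (T₀ := .down a c)
    (by rw [hd]; simp [sideOf, Tri.sides]) (by rw [htri]; simp) hdnac ?_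
  rw [hd]
  exact to_acrossInL C ⟨.up a c, by simp [thirdSide, sideOf, Tri.sides], by simp, hup2⟩

end ExitConfigs

section Sides

variable {n : ℕ} {f : Flow} {L : Set Tri}

def edgeMu : EdgeK → ℕ
  | .dl m _ => m
  | .dr m _ => m
  | .hz _ i => i

lemma mu_lineSucc (e : EdgeK) : edgeMu (lineSucc e) = edgeMu e + 1 := by
  cases e <;> rfl

lemma mu_le_of_valid {e : EdgeK} (h : e.valid n) : edgeMu e ≤ n := by
  cases e <;> simp [EdgeK.valid, edgeMu] at * <;> omega

lemma iter_dl (j m i : ℕ) : lineSucc^[j] (.dl m i) = .dl (m+j) i := by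
  induction j with
  | zero => rfl
  | succ j ih => rw [Function.iterate_succ_apply', ih]; simp [lineSucc]; omega

lemma iter_dr (j m i : ℕ) : lineSucc^[j] (.dr m i) = .dr (m+j) (i+j) := by
  induction j with
  | zero => rfl
  | succ j ih => rw [Function.iterate_succ_apply', ih]; simp [lineSucc]; omega

lemma iter_hz (j m i : ℕ) : lineSucc^[j] (.hz m i) = .hz m (i+j) := by
  induction j with
  | zero => rfl
  | succ j ih => rw [Function.iterate_succ_apply', ih]; simp [lineSucc]; omega

lemma mu_iter (j : ℕ) (e : EdgeK) : edgeMu (lineSucc^[j] e) = edgeMu e + j := by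
  induction j with
  | zero => rfl
  | succ j ih => rw [Function.iterate_succ_apply', mu_lineSucc, ih]; omega

lemma back_aux : ∀ (N : ℕ) (e : EdgeK), edgeMu e ≤ N → BorderEdge n L e →
    ∃ e₀ k₀, lineSucc^[k₀] e₀ = e ∧ (∀ j, j ≤ k₀ → BorderEdge n L (lineSucc^[j] e₀)) ∧
      ∀ y, lineSucc y = e₀ → ¬ BorderEdge n L y := by
  intro N
  induction N with
  | zero =>
    intro e hμ hb
    refine ⟨e, 0, rfl, ?_, ?_⟩
    · intro j hj
      have hj0 : j = 0 := by omega
      subst hj0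
      simpa using hb
    · intro y hy hby
      have := mu_lineSucc y
      rw [hy] at this
      omega
  | succ N ih =>
    intro e hμ hb
    by_cases hex : ∃ y, lineSucc y = e ∧ BorderEdge n L y
    · obtain ⟨y, hy, hby⟩ := hex
      have hμy : edgeMu y ≤ N := by
        have := mu_lineSucc y
        rw [hy] at this
        omega
      obtain ⟨e₀, k₀, heq, hall, hmax⟩ := ih y hμy hby
      refine ⟨e₀, k₀+1, ?_, ?_, hmax⟩
      · rw [Function.iterate_succ_apply', heq, hy]
      · intro j hj
        rcases Nat.lt_or_ge j (k₀+1) with h | h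
        · exact hall j (by omega)
        · have hj' : j = k₀ + 1 := by omega
          subst hj'
          rw [Function.iterate_succ_apply', heq, hy]
          exact hb
    · exact ⟨e, 0, rfl,
        fun j hj => by
          have hj0 : j = 0 := by omega
          subst hj0
          simpa using hb,
        fun y hy hby => hex ⟨y, hy, hby⟩⟩

lemma side_exists {e : EdgeK} (hb : BorderEdge n L e) :
    ∃ (e₀ : EdgeK) (k₀ K : ℕ),
      IsSide n L ((List.range (K+1)).map (fun j => lineSucc^[j] e₀)) ∧
      lineSucc^[k₀] e₀ = e ∧ k₀ ≤ K ∧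
      ((List.range (K+1)).map (fun j => lineSucc^[j] e₀)).head? = some e₀ ∧
      ((List.range (K+1)).map (fun j => lineSucc^[j] e₀)).getLast? =
        some (lineSucc^[K] e₀) ∧
      (∀ j, j ≤ K → BorderEdge n L (lineSucc^[j] e₀)) ∧
      (∀ y, lineSucc y = e₀ → ¬ BorderEdge n L y) ∧
      ¬ BorderEdge n L (lineSucc^[K+1] e₀) := by
  classical
  obtain ⟨e₀, k₀, heq, hall, hmax⟩ := back_aux (edgeMu e) e (le_refl _) hb
  have hP : ∃ j, ¬ BorderEdge n L (lineSucc^[j] e₀) := by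
    refine ⟨n+1, fun hc => ?_⟩
    have h1 := mu_le_of_valid hc.1
    rw [mu_iter] at h1
    omega
  obtain ⟨K, hK⟩ : ∃ K, Nat.find hP = K + 1 := by
    have h1 : Nat.find hP ≠ 0 := by
      intro h0
      have hsp := Nat.find_spec hP
      rw [h0] at hsp
      exact hsp (by simpa using hall 0 (by omega))
    exact ⟨Nat.find hP - 1, by omega⟩
  have hlastB : ¬ BorderEdge n L (lineSucc^[K+1] e₀) := by
    have hsp := Nat.find_spec hP
    rwa [hK] at hsp
  have hallB : ∀ j, j ≤ K → BorderEdge n L (lineSucc^[j] e₀) := by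
    intro j hj
    by_contra hc
    have := Nat.find_min' hP hc
    omega
  have hk₀K : k₀ ≤ K := by
    by_contra hc
    exact hlastB (hall (K+1) (by omega))
  have hhead : ((List.range (K+1)).map (fun j => lineSucc^[j] e₀)).head? = some e₀ := by
    rw [List.range_succ_eq_map]
    simp
  have hlast : ((List.range (K+1)).map (fun j => lineSucc^[j] e₀)).getLast? =
      some (lineSucc^[K] e₀) := by
    rw [List.range_succ, List.map_append]
    simp
  refine ⟨e₀, k₀, K, ⟨by simp, ?_, ?_, ?_, ?_⟩, heq, hk₀K, hhead, hlast, hallB, hmax, hlastB⟩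
  · intro e' he'
    simp only [List.mem_map, List.mem_range] at he'
    obtain ⟨j, hj, rfl⟩ := he'
    exact hallB j (by omega)
  · refine List.isChain_iff_getElem.mpr ?_
    intro i hi
    simp only [List.length_map, List.length_range] at hi
    simp only [List.get_eq_getElem, List.getElem_map, List.getElem_range]
    exact Function.iterate_succ_apply' _ _ _
  · intro e' a hh hls
    rw [hhead] at hh
    injection hh with hh
    subst hh
    exact hmax e' hls
  · intro a hl
    rw [hlast] at hl
    injection hl with hl
    subst hl
    rw [← Function.iterate_succ_apply' lineSucc K e₀]
    exact hlastB

end Sides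

section Assembly

variable {n : ℕ} {lam mu nu : ℕ → ℕ} {f : Flow} {L : Set Tri} {p : List RVertex}

lemma entrance_main (C : FlatCtx n f L) (hp : IsCompleteTP (ResidAdj n lam mu nu f) p)
    {t : Turn} (htp : RVertex.turn t ∈ p) (hmL : inL n L t.tri)
    (hbe : BorderEdge n L t.inE) :
    ∃ s, IsSide n L s ∧ entranceOf n L s t.inE := by
  obtain ⟨e₀, k₀, K, hside, hiter, hk₀K, hhead, hlast, hallB, hmax0, hmaxK⟩ := side_exists hbe
  have hv := (tp_facts hp htp).1
  have hsif : sideOf t.inE t.tri := hv.2.1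
  have hm : t.tri ∈ L := hmL.2
  refine ⟨_, hside, ?_⟩
  have hchain : ∀ j, j ≤ K → (inL n L (upOf (lineSucc^[j] e₀)) ↔ inL n L (upOf e₀)) := by
    intro j
    induction j with
    | zero => intro _; simp
    | succ j ih =>
      intro hj
      have hb2 : BorderEdge n L (lineSucc (lineSucc^[j] e₀)) := by
        rw [← Function.iterate_succ_apply' lineSucc j e₀]
        exact hallB (j+1) hj
      have h1 := same_side C (hallB j (by omega)) hb2
      rw [Function.iterate_succ_apply' lineSucc j e₀]
      exact h1.symm.trans (ih (by omega))
  have hchainE : inL n L (upOf t.inE) ↔ inL n L (upOf e₀) := by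
    have h := hchain k₀ hk₀K
    rwa [hiter] at h
  rcases hbe.2 with ⟨hupL, hnd⟩ | ⟨hdnI, hnup⟩
  · -- L is on the `up` side of the entered edge
    have htri : t.tri = upOf t.inE := by
      rcases sideOf_cases hsif with h | h
      · exact h
      · exact absurd ⟨t.tri, h, hmL⟩ hnd
    have hup₀ : inL n L (upOf e₀) := hchainE.mp hupL
    rcases hE : t.inE with ⟨M, I⟩ | ⟨M, I⟩ | ⟨M, I⟩
    · -- dl, up : entrance is the last edge of the list
      rw [hE] at htri
      simp only [upOf] at htri
      have hkK : k₀ = K := by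
        by_contra hne
        have hbv := hallB (k₀+1) (by omega)
        rw [Function.iterate_succ_apply', hiter, hE] at hbv
        simp only [lineSucc] at hbv
        exact enter_dl_up C hp htp hm htri hE (hE ▸ hbe) hbv
      refine Or.inr ⟨?_, by rw [hlast, ← hkK, hiter, hE]⟩
      rintro ⟨e', hh', hmatch⟩
      rw [hhead] at hh'
      injection hh' with hh'
      subst hh'
      have hbe₀ : BorderEdge n L e₀ := by simpa using hallB 0 (Nat.zero_le K)
      rcases hbe₀.2 with ⟨-, hnd₀⟩ | ⟨-, hnup₀⟩
      · rcases e₀ with ⟨m', i'⟩ | ⟨m', i'⟩ | ⟨m', i'⟩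
        · exact hnd₀ hmatch
        · rw [iter_dr, hE] at hiter; simp at hiter
        · rw [iter_hz, hE] at hiter; simp at hiter
      · exact hnup₀ hup₀
    · -- dr, up : entrance is the head of the list
      rw [hE] at htri
      simp only [upOf] at htri
      have hk0 : k₀ = 0 := by
        by_contra hne
        obtain ⟨j, hj⟩ : ∃ j, k₀ = j + 1 := ⟨k₀-1, by omega⟩
        rw [hj, Function.iterate_succ_apply'] at hiter
        have hpred : lineSucc (lineSucc^[j] e₀) = EdgeK.dr M I := hiter.trans hE
        have hpb : BorderEdge n L (lineSucc^[j] e₀) := hallB j (by omega)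
        rcases hy : (lineSucc^[j] e₀) with ⟨m', i'⟩ | ⟨m', i'⟩ | ⟨m', i'⟩ <;>
          rw [hy] at hpred hpb <;> simp only [lineSucc] at hpred
        · simp at hpred
        · simp only [EdgeK.dr.injEq] at hpred
          obtain ⟨h1, h2⟩ := hpred
          subst h1; subst h2
          exact enter_dr_up C hp htp hm htri hE (hE ▸ hbe) hpb
        · simp at hpred
      have he₀ : e₀ = t.inE := by rw [← hiter, hk0]; simp
      refine Or.inl ⟨⟨e₀, hhead, ?_⟩, by rw [hhead, he₀, hE]⟩
      rw [he₀, hE]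
      exact show inL n L (Tri.up M I) from htri ▸ hmL
    · -- hz, up : entrance is the last edge of the list
      have hval := hbe.1
      rw [hE] at hval
      simp only [EdgeK.valid] at hval
      obtain ⟨a, rfl⟩ : ∃ a, M = a + 1 := ⟨M - 1, by omega⟩
      rw [hE] at htri
      simp only [upOf, Nat.add_sub_cancel] at htri
      have hkK : k₀ = K := by
        by_contra hne
        have hbv := hallB (k₀+1) (by omega)
        rw [Function.iterate_succ_apply', hiter, hE] at hbv
        simp only [lineSucc] at hbv
        exact enter_hz_up C hp htp hm htri hE (hE ▸ hbe) hbv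
      refine Or.inr ⟨?_, by rw [hlast, ← hkK, hiter, hE]⟩
      rintro ⟨e', hh', hmatch⟩
      rw [hhead] at hh'
      injection hh' with hh'
      subst hh'
      have hbe₀ : BorderEdge n L e₀ := by simpa using hallB 0 (Nat.zero_le K)
      rcases hbe₀.2 with ⟨-, hnd₀⟩ | ⟨-, hnup₀⟩
      · rcases e₀ with ⟨m', i'⟩ | ⟨m', i'⟩ | ⟨m', i'⟩
        · rw [iter_dl, hE] at hiter; simp at hiter
        · rw [iter_dr, hE] at hiter; simp at hiter
        · exact hnd₀ hmatch
      · exact hnup₀ hup₀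
  · -- L is on the `down` side of the entered edge
    have htri' : dnOf? t.inE = some t.tri := by
      rcases sideOf_cases hsif with h | h
      · exact absurd (h ▸ hmL) hnup
      · exact h
    have hnup₀ : ¬ inL n L (upOf e₀) := fun hc => hnup (hchainE.mpr hc)
    rcases hE : t.inE with ⟨M, I⟩ | ⟨M, I⟩ | ⟨M, I⟩
    · -- dl, dn : entrance is the head of the list
      rw [hE] at htri'
      rcases I with _ | b
      · simp [dnOf?] at htri'
      simp only [dnOf?, Option.some.injEq, Nat.add_sub_cancel] at htri'
      rw [if_neg (by omega)] at htri'
      injection htri' with htri'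
      have htri : t.tri = Tri.down M b := htri'.symm
      obtain ⟨a, rfl⟩ : ∃ a, M = a + 1 := by
        have := hmL.1
        rw [htri] at this
        simp only [Tri.valid] at this
        exact ⟨M - 1, by omega⟩
      have hk0 : k₀ = 0 := by
        by_contra hne
        obtain ⟨j, hj⟩ : ∃ j, k₀ = j + 1 := ⟨k₀-1, by omega⟩
        rw [hj, Function.iterate_succ_apply'] at hiter
        have hpred : lineSucc (lineSucc^[j] e₀) = EdgeK.dl (a+1) (b+1) := hiter.trans hE
        have hpb : BorderEdge n L (lineSucc^[j] e₀) := hallB j (by omega)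
        rcases hy : (lineSucc^[j] e₀) with ⟨m', i'⟩ | ⟨m', i'⟩ | ⟨m', i'⟩ <;>
          rw [hy] at hpred hpb <;> simp only [lineSucc] at hpred
        · simp only [EdgeK.dl.injEq] at hpred
          obtain ⟨h1, h2⟩ := hpred
          subst h2
          obtain rfl : m' = a := by omega
          exact enter_dl_dn C hp htp hm htri hE (hE ▸ hbe) hpb
        · simp at hpred
        · simp at hpred
      have he₀ : e₀ = t.inE := by rw [← hiter, hk0]; simp
      refine Or.inl ⟨⟨e₀, hhead, ?_⟩, by rw [hhead, he₀, hE]⟩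
      rw [he₀, hE]
      exact show dnIn n L (EdgeK.dl (a+1) (b+1)) from
        ⟨t.tri, by rw [htri]; simp [dnOf?], hmL⟩
    · -- dr, dn : entrance is the last edge of the list
      rw [hE] at htri'
      simp only [dnOf?, Option.some.injEq] at htri'
      have htri : t.tri = Tri.down M I := htri'.symm
      have hkK : k₀ = K := by
        by_contra hne
        have hbv := hallB (k₀+1) (by omega)
        rw [Function.iterate_succ_apply', hiter, hE] at hbv
        simp only [lineSucc] at hbv
        exact enter_dr_dn C hp htp hm htri hE (hE ▸ hbe) hbv
      refine Or.inr ⟨?_, by rw [hlast, ← hkK, hiter, hE]⟩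
      rintro ⟨e', hh', hmatch⟩
      rw [hhead] at hh'
      injection hh' with hh'
      subst hh'
      rcases e₀ with ⟨m', i'⟩ | ⟨m', i'⟩ | ⟨m', i'⟩
      · rw [iter_dl, hE] at hiter; simp at hiter
      · exact hnup₀ hmatch
      · rw [iter_hz, hE] at hiter; simp at hiter
    · -- hz, dn : entrance is the head of the list
      rw [hE] at htri'
      simp only [dnOf?, Option.some.injEq] at htri'
      have htri : t.tri = Tri.down M I := htri'.symm
      obtain ⟨a, rfl⟩ : ∃ a, M = a + 1 := by
        have := hmL.1
        rw [htri] at this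
        simp only [Tri.valid] at this
        exact ⟨M - 1, by omega⟩
      have hk0 : k₀ = 0 := by
        by_contra hne
        obtain ⟨j, hj⟩ : ∃ j, k₀ = j + 1 := ⟨k₀-1, by omega⟩
        rw [hj, Function.iterate_succ_apply'] at hiter
        have hpred : lineSucc (lineSucc^[j] e₀) = EdgeK.hz (a+1) I := hiter.trans hE
        have hpb : BorderEdge n L (lineSucc^[j] e₀) := hallB j (by omega)
        rcases hy : (lineSucc^[j] e₀) with ⟨m', i'⟩ | ⟨m', i'⟩ | ⟨m', i'⟩ <;>
          rw [hy] at hpred hpb <;> simp only [lineSucc] at hpred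
        · simp at hpred
        · simp at hpred
        · simp only [EdgeK.hz.injEq] at hpred
          obtain ⟨h1, h2⟩ := hpred
          subst h1
          subst h2
          exact enter_hz_dn C hp htp hm htri hE (hE ▸ hbe) hpb
      have he₀ : e₀ = t.inE := by rw [← hiter, hk0]; simp
      refine Or.inl ⟨⟨e₀, hhead, ?_⟩, by rw [hhead, he₀, hE]⟩
      rw [he₀, hE]
      exact show dnIn n L (EdgeK.hz (a+1) I) from ⟨t.tri, by rw [htri]; rfl, hmL⟩

end Assembly

section Assembly2

variable {n : ℕ} {lam mu nu : ℕ → ℕ} {f : Flow} {L : Set Tri} {p : List RVertex}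

lemma exit_main (C : FlatCtx n f L) (hp : IsCompleteTP (ResidAdj n lam mu nu f) p)
    {t : Turn} (htp : RVertex.turn t ∈ p) (hmL : inL n L t.tri)
    (hbe : BorderEdge n L t.outE) :
    ∃ s, IsSide n L s ∧ exitOf n L s t.outE := by
  obtain ⟨e₀, k₀, K, hside, hiter, hk₀K, hhead, hlast, hallB, hmax0, hmaxK⟩ := side_exists hbe
  have hv := (tp_facts hp htp).1
  have hsif : sideOf t.outE t.tri := hv.2.2.1
  have hm : t.tri ∈ L := hmL.2
  refine ⟨_, hside, ?_⟩
  have hchain : ∀ j, j ≤ K → (inL n L (upOf (lineSucc^[j] e₀)) ↔ inL n L (upOf e₀)) := by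
    intro j
    induction j with
    | zero => intro _; simp
    | succ j ih =>
      intro hj
      have hb2 : BorderEdge n L (lineSucc (lineSucc^[j] e₀)) := by
        rw [← Function.iterate_succ_apply' lineSucc j e₀]
        exact hallB (j+1) hj
      have h1 := same_side C (hallB j (by omega)) hb2
      rw [Function.iterate_succ_apply' lineSucc j e₀]
      exact h1.symm.trans (ih (by omega))
  have hchainE : inL n L (upOf t.outE) ↔ inL n L (upOf e₀) := by
    have h := hchain k₀ hk₀K
    rwa [hiter] at h
  rcases hbe.2 with ⟨hupL, hnd⟩ | ⟨hdnI, hnup⟩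
  · -- L is on the `up` side of the exited edge
    have htri : t.tri = upOf t.outE := by
      rcases sideOf_cases hsif with h | h
      · exact h
      · exact absurd ⟨t.tri, h, hmL⟩ hnd
    have hup₀ : inL n L (upOf e₀) := hchainE.mp hupL
    rcases hE : t.outE with ⟨M, I⟩ | ⟨M, I⟩ | ⟨M, I⟩
    · -- dl, up : exit is the head of the list
      rw [hE] at htri
      simp only [upOf] at htri
      have hk0 : k₀ = 0 := by
        by_contra hne
        obtain ⟨j, hj⟩ : ∃ j, k₀ = j + 1 := ⟨k₀-1, by omega⟩
        rw [hj, Function.iterate_succ_apply'] at hiter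
        have hpred : lineSucc (lineSucc^[j] e₀) = EdgeK.dl M I := hiter.trans hE
        have hpb : BorderEdge n L (lineSucc^[j] e₀) := hallB j (by omega)
        rcases hy : (lineSucc^[j] e₀) with ⟨m', i'⟩ | ⟨m', i'⟩ | ⟨m', i'⟩ <;>
          rw [hy] at hpred hpb <;> simp only [lineSucc] at hpred
        · simp only [EdgeK.dl.injEq] at hpred
          obtain ⟨h1, h2⟩ := hpred
          subst h2
          obtain rfl : M = m' + 1 := by omega
          exact exit_dl_up C hp htp hm htri hE (hE ▸ hbe) hpb
        · simp at hpred
        · simp at hpred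
      have he₀ : e₀ = t.outE := by rw [← hiter, hk0]; simp
      refine Or.inr ⟨?_, by rw [hhead, he₀, hE]⟩
      rintro ⟨e', hh', hmatch⟩
      rw [hhead] at hh'
      injection hh' with hh'
      subst hh'
      rw [he₀, hE] at hmatch
      have hmatch' : dnIn n L (EdgeK.dl M I) := hmatch
      rw [← hE] at hmatch'
      exact hnd hmatch'
    · -- dr, up : exit is the last edge of the list
      rw [hE] at htri
      simp only [upOf] at htri
      have hkK : k₀ = K := by
        by_contra hne
        have hbv := hallB (k₀+1) (by omega)
        rw [Function.iterate_succ_apply', hiter, hE] at hbv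
        simp only [lineSucc] at hbv
        exact exit_dr_up C hp htp hm htri hE (hE ▸ hbe) hbv
      refine Or.inl ⟨⟨e₀, hhead, ?_⟩, by rw [hlast, ← hkK, hiter, hE]⟩
      rcases e₀ with ⟨m', i'⟩ | ⟨m', i'⟩ | ⟨m', i'⟩
      · rw [iter_dl, hE] at hiter; simp at hiter
      · exact hup₀
      · rw [iter_hz, hE] at hiter; simp at hiter
    · -- hz, up : exit is the head of the list
      have hval := hbe.1
      rw [hE] at hval
      simp only [EdgeK.valid] at hval
      obtain ⟨a, rfl⟩ : ∃ a, M = a + 1 := ⟨M - 1, by omega⟩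
      rw [hE] at htri
      simp only [upOf, Nat.add_sub_cancel] at htri
      have hk0 : k₀ = 0 := by
        by_contra hne
        obtain ⟨j, hj⟩ : ∃ j, k₀ = j + 1 := ⟨k₀-1, by omega⟩
        rw [hj, Function.iterate_succ_apply'] at hiter
        have hpred : lineSucc (lineSucc^[j] e₀) = EdgeK.hz (a+1) I := hiter.trans hE
        have hpb : BorderEdge n L (lineSucc^[j] e₀) := hallB j (by omega)
        rcases hy : (lineSucc^[j] e₀) with ⟨m', i'⟩ | ⟨m', i'⟩ | ⟨m', i'⟩ <;>
          rw [hy] at hpred hpb <;> simp only [lineSucc] at hpred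
        · simp at hpred
        · simp at hpred
        · simp only [EdgeK.hz.injEq] at hpred
          obtain ⟨h1, h2⟩ := hpred
          subst h1
          subst h2
          exact exit_hz_up C hp htp hm htri hE (hE ▸ hbe) hpb
      have he₀ : e₀ = t.outE := by rw [← hiter, hk0]; simp
      refine Or.inr ⟨?_, by rw [hhead, he₀, hE]⟩
      rintro ⟨e', hh', hmatch⟩
      rw [hhead] at hh'
      injection hh' with hh'
      subst hh'
      rw [he₀, hE] at hmatch
      have hmatch' : dnIn n L (EdgeK.hz (a+1) I) := hmatch
      rw [← hE] at hmatch'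
      exact hnd hmatch'
  · -- L is on the `down` side of the exited edge
    have htri' : dnOf? t.outE = some t.tri := by
      rcases sideOf_cases hsif with h | h
      · exact absurd (h ▸ hmL) hnup
      · exact h
    have hnup₀ : ¬ inL n L (upOf e₀) := fun hc => hnup (hchainE.mpr hc)
    rcases hE : t.outE with ⟨M, I⟩ | ⟨M, I⟩ | ⟨M, I⟩
    · -- dl, dn : exit is the last edge of the list
      rw [hE] at htri'
      rcases I with _ | b
      · simp [dnOf?] at htri'
      simp only [dnOf?, Option.some.injEq, Nat.add_sub_cancel] at htri'
      rw [if_neg (by omega)] at htri'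
      injection htri' with htri'
      have htri : t.tri = Tri.down M b := htri'.symm
      have hkK : k₀ = K := by
        by_contra hne
        have hbv := hallB (k₀+1) (by omega)
        rw [Function.iterate_succ_apply', hiter, hE] at hbv
        simp only [lineSucc] at hbv
        exact exit_dl_dn C hp htp hm htri hE (hE ▸ hbe) hbv
      refine Or.inl ⟨⟨e₀, hhead, ?_⟩, by rw [hlast, ← hkK, hiter, hE]⟩
      have hbe₀ : BorderEdge n L e₀ := by simpa using hallB 0 (Nat.zero_le K)
      rcases e₀ with ⟨m', i'⟩ | ⟨m', i'⟩ | ⟨m', i'⟩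
      · rcases hbe₀.2 with ⟨hup₀', -⟩ | ⟨hdn₀, -⟩
        · exact absurd hup₀' hnup₀
        · exact hdn₀
      · rw [iter_dr, hE] at hiter; simp at hiter
      · rw [iter_hz, hE] at hiter; simp at hiter
    · -- dr, dn : exit is the head of the list
      rw [hE] at htri'
      simp only [dnOf?, Option.some.injEq] at htri'
      have htri : t.tri = Tri.down M I := htri'.symm
      have hk0 : k₀ = 0 := by
        by_contra hne
        obtain ⟨j, hj⟩ : ∃ j, k₀ = j + 1 := ⟨k₀-1, by omega⟩
        rw [hj, Function.iterate_succ_apply'] at hiter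
        have hpred : lineSucc (lineSucc^[j] e₀) = EdgeK.dr M I := hiter.trans hE
        have hpb : BorderEdge n L (lineSucc^[j] e₀) := hallB j (by omega)
        rcases hy : (lineSucc^[j] e₀) with ⟨m', i'⟩ | ⟨m', i'⟩ | ⟨m', i'⟩ <;>
          rw [hy] at hpred hpb <;> simp only [lineSucc] at hpred
        · simp at hpred
        · simp only [EdgeK.dr.injEq] at hpred
          obtain ⟨h1, h2⟩ := hpred
          subst h1
          subst h2
          exact exit_dr_dn C hp htp hm htri hE (hE ▸ hbe) hpb
        · simp at hpred
      have he₀ : e₀ = t.outE := by rw [← hiter, hk0]; simp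
      refine Or.inr ⟨?_, by rw [hhead, he₀, hE]⟩
      rintro ⟨e', hh', hmatch⟩
      rw [hhead] at hh'
      injection hh' with hh'
      subst hh'
      rw [he₀, hE] at hmatch
      have hmatch' : inL n L (upOf (EdgeK.dr M I)) := hmatch
      rw [← hE] at hmatch'
      exact hnup hmatch'
    · -- hz, dn : exit is the last edge of the list
      rw [hE] at htri'
      simp only [dnOf?, Option.some.injEq] at htri'
      have htri : t.tri = Tri.down M I := htri'.symm
      obtain ⟨a, rfl⟩ : ∃ a, M = a + 1 := by
        have := hmL.1
        rw [htri] at this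
        simp only [Tri.valid] at this
        exact ⟨M - 1, by omega⟩
      have hkK : k₀ = K := by
        by_contra hne
        have hbv := hallB (k₀+1) (by omega)
        rw [Function.iterate_succ_apply', hiter, hE] at hbv
        simp only [lineSucc] at hbv
        exact exit_hz_dn C hp htp hm htri hE (hE ▸ hbe) hbv
      refine Or.inl ⟨⟨e₀, hhead, ?_⟩, by rw [hlast, ← hkK, hiter, hE]⟩
      have hbe₀ : BorderEdge n L e₀ := by simpa using hallB 0 (Nat.zero_le K)
      rcases e₀ with ⟨m', i'⟩ | ⟨m', i'⟩ | ⟨m', i'⟩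
      · rw [iter_dl, hE] at hiter; simp at hiter
      · rw [iter_dr, hE] at hiter; simp at hiter
      · rcases hbe₀.2 with ⟨hup₀', -⟩ | ⟨hdn₀, -⟩
        · exact absurd hup₀' hnup₀
        · exact hdn₀

end Assembly2

/-- Let `p` be a complete turnpath in `R_f` and `L` an `f`-flatspace.  Then
(1) `p` enters `L` only by crossing entrance edges of sides of `L` and leaves
`L` only by crossing exit edges of sides of `L`; and
(2) inside `L`, `p` uses only turnvertices in border triangles of `L` and
traverses the border of `L` in counterclockwise direction (every
counterclockwise turn of `p` in `L` closes off a rhombus leaving `L`). -/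
theorem flatspace_traversal (n : ℕ) (hn : 1 ≤ n) (lam mu nu : ℕ → ℕ)
    (hpart : PartitionData n lam mu nu)
    (f : Flow) (hf : MemB n lam mu nu f)
    (p : List RVertex) (hp : IsCompleteTP (ResidAdj n lam mu nu f) p)
    (L : Set Tri) (hL : IsFlatspace n f L) :
    ((∀ t : Turn, RVertex.turn t ∈ p → inL n L t.tri → BorderEdge n L t.inE →
        ∃ s : List EdgeK, IsSide n L s ∧ entranceOf n L s t.inE) ∧
     (∀ t : Turn, RVertex.turn t ∈ p → inL n L t.tri → BorderEdge n L t.outE →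
        ∃ s : List EdgeK, IsSide n L s ∧ exitOf n L s t.outE)) ∧
    ((∀ t : Turn, RVertex.turn t ∈ p → inL n L t.tri → ¬ InnerTri n L t.tri) ∧
     (∀ t : Turn, RVertex.turn t ∈ p → inL n L t.tri → IsCCWTurn t → ¬ acrossInL n L t)) := by
  have C := flatCtx_of hf hL
  refine ⟨⟨?_, ?_⟩, ⟨?_, ?_⟩⟩
  · intro t htp hmL hbe
    exact entrance_main C hp htp hmL hbe
  · intro t htp hmL hbe
    exact exit_main C hp htp hmL hbe
  · intro t htp hmL hI
    exact part2a C hp htp hmL.2 hI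
  · intro t htp hmL hccw hacr
    exact part2b C hp htp hmL.2 hccw hacr

end LRFlows
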